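/- arXiv:1205.1650 — 12 statements merged into one kernel-verified Lean document; each statement's English description precedes it below -/
import Mathlib

section
/- Under the RIP hypothesis with constants 0 < α ≤ β satisfying β ≤ 1/μ, set a := 2/(μα) − 2. Then for every k ≥ 0 the IHT iterates satisfy ‖x_A − x^k‖² ≤ a^k·‖x_A‖² + (4/α)·Σ_{n=0}^{k−1} a^{k−1−n}·‖e_A^n‖². -/
/-- Under the RIP hypothesis with constants `0 < α ≤ β` satisfying `β ≤ 1/μ`,
setting `a := 2/(μα) − 2`, for every `k ≥ 0` the nonlinear IHT iterates satisfy
`‖x_A − x^k‖² ≤ a^k‖x_A‖² + (4/α)·Σ_{n=0}^{k−1} a^{k−1−n}‖e_A^n‖²`. -/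
theorem nonlinear_iht_accumulated_error_bound
    {N M : ℕ}
    (Φ : EuclideanSpace ℝ (Fin N) → EuclideanSpace ℝ (Fin M))
    (Φ' : EuclideanSpace ℝ (Fin N) → (EuclideanSpace ℝ (Fin N) →L[ℝ] EuclideanSpace ℝ (Fin M)))
    (hΦ : ∀ u, HasFDerivAt Φ (Φ' u) u)
    (A : Set (EuclideanSpace ℝ (Fin N))) (hA0 : (0 : EuclideanSpace ℝ (Fin N)) ∈ A)
    (PA : EuclideanSpace ℝ (Fin N) → EuclideanSpace ℝ (Fin N))
    (hPA : ∀ z, PA z ∈ A ∧ ∀ a ∈ A, ‖z - PA z‖ ≤ ‖z - a‖)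
    (y : EuclideanSpace ℝ (Fin M)) (μ α β : ℝ)
    (hμ : 0 < μ) (hα : 0 < α) (hαβ : α ≤ β) (hβμ : β ≤ 1 / μ)
    (hRIP : ∀ u ∈ A, ∀ v ∈ A, ∀ w ∈ A,
      α * ‖u - v‖ ^ 2 ≤ ‖Φ' w (u - v)‖ ^ 2 ∧ ‖Φ' w (u - v)‖ ^ 2 ≤ β * ‖u - v‖ ^ 2)
    (x : ℕ → EuclideanSpace ℝ (Fin N)) (hx0 : x 0 = 0)
    (hxit : ∀ n, x (n + 1) =
      PA (x n + μ • (ContinuousLinearMap.adjoint (Φ' (x n))) (y - Φ (x n))))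
    (xA : EuclideanSpace ℝ (Fin N)) (hxA : xA ∈ A) :
    ∀ k : ℕ, ‖xA - x k‖ ^ 2 ≤
      (2 / (μ * α) - 2) ^ k * ‖xA‖ ^ 2 +
        (4 / α) * ∑ n ∈ Finset.range k,
          (2 / (μ * α) - 2) ^ (k - 1 - n) * ‖y - Φ (x n) - (Φ' (x n)) (xA - x n)‖ ^ 2 := by
  have hμα0 : 0 < μ * α := mul_pos hμ hα
  have hμβ1 : μ * β ≤ 1 := by
    have h := (le_div_iff₀ hμ).mp hβμ
    linarith
  have hμα1 : μ * α ≤ 1 := le_trans (by nlinarith) hμβ1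
  set a : ℝ := 2 / (μ * α) - 2 with ha
  have ha0 : (0:ℝ) ≤ a := by
    rw [ha, sub_nonneg, le_div_iff₀ hμα0]; linarith
  have hmem : ∀ n, x n ∈ A := by
    intro n
    cases n with
    | zero => rw [hx0]; exact hA0
    | succ n => rw [hxit n]; exact (hPA _).1
  -- one-step estimate
  have step : ∀ n, ‖xA - x (n+1)‖ ^ 2 ≤
      a * ‖xA - x n‖ ^ 2 + (4 / α) * ‖y - Φ (x n) - (Φ' (x n)) (xA - x n)‖ ^ 2 := by
    intro n
    set T := Φ' (x n) with hT
    set d := xA - x n with hd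
    set e := y - Φ (x n) - T d with he
    set z := x n + μ • (ContinuousLinearMap.adjoint T) (y - Φ (x n)) with hz
    set w := x (n+1) - xA with hw
    have hwn : ‖xA - x (n+1)‖ = ‖w‖ := by rw [hw, norm_sub_rev]
    have hx1 : x (n+1) = PA z := hxit n
    have hproj : ‖z - x (n+1)‖ ≤ ‖z - xA‖ := by
      rw [hx1]; exact (hPA z).2 xA hxA
    have hzw : z - x (n+1) = (z - xA) - w := by rw [hw]; abel
    have hsq : ‖(z - xA) - w‖ ^ 2 ≤ ‖z - xA‖ ^ 2 := by
      rw [← hzw]; exact pow_le_pow_left₀ (norm_nonneg _) hproj 2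
    rw [norm_sub_sq_real] at hsq
    have hkey1 : ‖w‖ ^ 2 ≤ 2 * (inner ℝ (z - xA) w : ℝ) := by linarith
    have hy : y - Φ (x n) = T d + e := by rw [he]; abel
    have h1 : z - xA = μ • ((ContinuousLinearMap.adjoint T) (T d + e)) - d := by
      rw [hz, hy, hd]; abel
    have hinner : (inner ℝ (z - xA) w : ℝ) = μ * ((inner ℝ (T d) (T w) : ℝ) + (inner ℝ e (T w) : ℝ)) - (inner ℝ d w : ℝ) := by
      rw [h1, inner_sub_left, real_inner_smul_left,
        ContinuousLinearMap.adjoint_inner_left, inner_add_left]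
    -- polarization identities
    have hdw : T d + T w = T (d + w) := (map_add T d w).symm
    have hpol1 : ‖T (d + w)‖ ^ 2 = ‖T d‖ ^ 2 + 2 * (inner ℝ (T d) (T w) : ℝ) + ‖T w‖ ^ 2 := by
      rw [← hdw]; exact norm_add_sq_real _ _
    have hpol2 : ‖d + w‖ ^ 2 = ‖d‖ ^ 2 + 2 * (inner ℝ d w : ℝ) + ‖w‖ ^ 2 := norm_add_sq_real _ _
    -- RIP bounds
    have hs : d + w = x (n+1) - x n := by rw [hd, hw]; abel
    have hRIP1 : ‖T (d + w)‖ ^ 2 ≤ β * ‖d + w‖ ^ 2 := by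
      rw [hs]; exact (hRIP _ (hmem (n+1)) _ (hmem n) _ (hmem n)).2
    have hRIP2 : α * ‖d‖ ^ 2 ≤ ‖T d‖ ^ 2 := by
      rw [hd]; exact (hRIP _ hxA _ (hmem n) _ (hmem n)).1
    have hRIP3 : α * ‖w‖ ^ 2 ≤ ‖T w‖ ^ 2 := by
      rw [hw]; exact (hRIP _ (hmem (n+1)) _ hxA _ (hmem n)).1
    -- from the projection inequality:
    -- μ(‖Tw‖² − 2⟪e,Tw⟫) ≤ (μβ−1)‖d+w‖² + (1−μα)‖d‖² ≤ (1−μα)‖d‖²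
    have hTwe : ‖T w - e‖ ^ 2 = ‖T w‖ ^ 2 - 2 * (inner ℝ e (T w) : ℝ) + ‖e‖ ^ 2 := by
      rw [norm_sub_sq_real, real_inner_comm]
    have hm1 : μ * ‖T (d + w)‖ ^ 2 ≤ μ * (β * ‖d + w‖ ^ 2) :=
      mul_le_mul_of_nonneg_left hRIP1 hμ.le
    have hm2 : μ * (α * ‖d‖ ^ 2) ≤ μ * ‖T d‖ ^ 2 :=
      mul_le_mul_of_nonneg_left hRIP2 hμ.le
    have hm3 : μ * β * ‖d + w‖ ^ 2 ≤ 1 * ‖d + w‖ ^ 2 :=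
      mul_le_mul_of_nonneg_right hμβ1 (sq_nonneg _)
    have hkey' : ‖w‖ ^ 2 ≤ 2 * (μ * (inner ℝ (T d) (T w) : ℝ)) +
        2 * (μ * (inner ℝ e (T w) : ℝ)) - 2 * (inner ℝ d w : ℝ) := by
      rw [hinner] at hkey1; linarith [hkey1]
    have hpolμ : μ * ‖T (d + w)‖ ^ 2 = μ * ‖T d‖ ^ 2 +
        2 * (μ * (inner ℝ (T d) (T w) : ℝ)) + μ * ‖T w‖ ^ 2 := by rw [hpol1]; ring
    have hTweμ : μ * ‖T w - e‖ ^ 2 = μ * ‖T w‖ ^ 2 -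
        2 * (μ * (inner ℝ e (T w) : ℝ)) + μ * ‖e‖ ^ 2 := by rw [hTwe]; ring
    have hmid : μ * ‖T w - e‖ ^ 2 ≤ (1 - μ * α) * ‖d‖ ^ 2 + μ * ‖e‖ ^ 2 := by
      linarith [hkey', hpolμ, hTweμ, hpol2, hm1, hm2, hm3]
    have hTw2 : ‖T w‖ ^ 2 ≤ 2 * ‖T w - e‖ ^ 2 + 2 * ‖e‖ ^ 2 := by
      have h := norm_add_sq_real (T w - e) e
      have h2 : T w - e + e = T w := by abel
      rw [h2] at h
      have h3 : (inner ℝ (T w - e) e : ℝ) ≤ ‖T w - e‖ * ‖e‖ := real_inner_le_norm _ _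
      have h4 : 2 * ‖T w - e‖ * ‖e‖ ≤ ‖T w - e‖ ^ 2 + ‖e‖ ^ 2 := two_mul_le_add_sq _ _
      linarith
    -- α‖w‖² ≤ (2(1−μα)/μ)‖d‖² + 4‖e‖², i.e. μα‖w‖² ≤ (2−2μα)‖d‖² + 4μ‖e‖²
    have hf1 : μ * (α * ‖w‖ ^ 2) ≤ μ * ‖T w‖ ^ 2 :=
      mul_le_mul_of_nonneg_left hRIP3 hμ.le
    have hf2 : μ * ‖T w‖ ^ 2 ≤ μ * (2 * ‖T w - e‖ ^ 2 + 2 * ‖e‖ ^ 2) :=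
      mul_le_mul_of_nonneg_left hTw2 hμ.le
    have hfin : μ * α * ‖w‖ ^ 2 ≤ (2 - 2 * (μ * α)) * ‖d‖ ^ 2 + 4 * μ * ‖e‖ ^ 2 := by
      linarith [hf1, hf2, hmid]
    rw [hwn]
    have hrhs : a * ‖d‖ ^ 2 + (4 / α) * ‖e‖ ^ 2 =
        ((2 - 2 * (μ * α)) * ‖d‖ ^ 2 + 4 * μ * ‖e‖ ^ 2) / (μ * α) := by
      rw [ha]; field_simp
    rw [hrhs, le_div_iff₀ hμα0]
    linarith [hfin]
  -- induction
  intro k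
  induction k with
  | zero => simp [hx0]
  | succ k ih =>
    have hstep := step k
    have h2 : a * ‖xA - x k‖ ^ 2 ≤ a * (a ^ k * ‖xA‖ ^ 2 +
        (4 / α) * ∑ n ∈ Finset.range k,
          a ^ (k - 1 - n) * ‖y - Φ (x n) - (Φ' (x n)) (xA - x n)‖ ^ 2) :=
      mul_le_mul_of_nonneg_left ih ha0
    have hsum : a * ∑ n ∈ Finset.range k,
        a ^ (k - 1 - n) * ‖y - Φ (x n) - (Φ' (x n)) (xA - x n)‖ ^ 2 =
        ∑ n ∈ Finset.range k,
        a ^ (k - n) * ‖y - Φ (x n) - (Φ' (x n)) (xA - x n)‖ ^ 2 := by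
      rw [Finset.mul_sum]
      refine Finset.sum_congr rfl fun n hn => ?_
      have hn' : n < k := Finset.mem_range.mp hn
      have hkn : k - n = (k - 1 - n) + 1 := by omega
      rw [hkn, pow_succ]; ring
    calc ‖xA - x (k+1)‖ ^ 2
        ≤ a * ‖xA - x k‖ ^ 2 +
          (4 / α) * ‖y - Φ (x k) - (Φ' (x k)) (xA - x k)‖ ^ 2 := hstep
      _ ≤ a * (a ^ k * ‖xA‖ ^ 2 +
            (4 / α) * ∑ n ∈ Finset.range k,
              a ^ (k - 1 - n) * ‖y - Φ (x n) - (Φ' (x n)) (xA - x n)‖ ^ 2) +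
          (4 / α) * ‖y - Φ (x k) - (Φ' (x k)) (xA - x k)‖ ^ 2 := by linarith
      _ = a ^ (k+1) * ‖xA‖ ^ 2 +
          (4 / α) * ∑ n ∈ Finset.range (k+1),
            a ^ (k + 1 - 1 - n) * ‖y - Φ (x n) - (Φ' (x n)) (xA - x n)‖ ^ 2 := by
        simp only [Nat.add_sub_cancel, Finset.sum_range_succ, Nat.sub_self, pow_zero, one_mul]
        rw [← hsum, pow_succ]
        ring
end

section
/- Under the RIP hypothesis with constants 0 < α ≤ β satisfying β ≤ 1/μ, set a := 2/(μα) − 2. Then for every x ∈ H and every k ≥ 0 the IHT iterates satisfy ‖x − x^k‖ ≤ a^{k/2}·‖x_A‖ + √((4/α)·Σ_{n=0}^{k−1} a^{k−1−n}·‖e_A^n‖²) + ‖x_A − x‖. -/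
set_option maxHeartbeats 1000000 in
lemma step_aux {N M : ℕ} (T : EuclideanSpace ℝ (Fin N) →L[ℝ] EuclideanSpace ℝ (Fin M))
    (xn x' xA : EuclideanSpace ℝ (Fin N)) (r : EuclideanSpace ℝ (Fin M)) (μ α : ℝ)
    (hμ : 0 < μ) (hα : 0 < α)
    (hproj : ‖xn + μ • (ContinuousLinearMap.adjoint T) r - x'‖ ≤
      ‖xn + μ • (ContinuousLinearMap.adjoint T) r - xA‖)
    (hlow_v : α * ‖xA - xn‖ ^ 2 ≤ ‖T (xA - xn)‖ ^ 2)
    (hlow_w : α * ‖xA - x'‖ ^ 2 ≤ ‖T (xA - x')‖ ^ 2)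
    (hup : μ * ‖T (x' - xn)‖ ^ 2 ≤ ‖x' - xn‖ ^ 2) :
    ‖xA - x'‖ ^ 2 ≤ (2 / (μ * α) - 2) * ‖xA - xn‖ ^ 2
      + (4 / α) * ‖r - T (xA - xn)‖ ^ 2 := by
  set u := xn + μ • (ContinuousLinearMap.adjoint T) r with hu
  set v := xA - xn with hv
  set w := xA - x' with hw
  set e := r - T v with he
  have hsq : ‖u - x'‖ ^ 2 ≤ ‖u - xA‖ ^ 2 := pow_le_pow_left₀ (norm_nonneg _) hproj 2
  have hexp : ‖u - x'‖ ^ 2 = ‖u - xA‖ ^ 2 + 2 * (inner ℝ (u - xA) w : ℝ) + ‖w‖ ^ 2 := by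
    rw [show u - x' = (u - xA) + w by rw [hw]; abel]
    exact norm_add_sq_real _ _
  have h1 : ‖w‖ ^ 2 + 2 * (inner ℝ (u - xA) w : ℝ) ≤ 0 := by linarith
  have hr : r = T v + e := by rw [he]; abel
  have h2 : (inner ℝ (u - xA) w : ℝ)
      = -(inner ℝ v w : ℝ) + μ * (inner ℝ (T v) (T w) : ℝ) + μ * (inner ℝ e (T w) : ℝ) := by
    have huxa : u - xA = -v + μ • ((ContinuousLinearMap.adjoint T) r) := by
      rw [hu, hv]; abel
    rw [huxa, inner_add_left, inner_neg_left, real_inner_smul_left,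
      ContinuousLinearMap.adjoint_inner_left, hr, inner_add_left]
    ring
  have h1' : ‖w‖ ^ 2 ≤ 2 * (inner ℝ v w : ℝ) - 2 * (μ * (inner ℝ (T v) (T w) : ℝ))
      - 2 * (μ * (inner ℝ e (T w) : ℝ)) := by
    rw [h2] at h1; linarith
  have h3 : ‖v - w‖ ^ 2 = ‖v‖ ^ 2 - 2 * (inner ℝ v w : ℝ) + ‖w‖ ^ 2 := norm_sub_sq_real v w
  have h4 : ‖T (v - w)‖ ^ 2 = ‖T v‖ ^ 2 - 2 * (inner ℝ (T v) (T w) : ℝ) + ‖T w‖ ^ 2 := by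
    rw [map_sub]; exact norm_sub_sq_real _ _
  have h4μ : 2 * (μ * (inner ℝ (T v) (T w) : ℝ))
      = μ * ‖T v‖ ^ 2 + μ * ‖T w‖ ^ 2 - μ * ‖T (v - w)‖ ^ 2 := by
    linear_combination μ * h4
  have hvw : v - w = x' - xn := by rw [hv, hw]; abel
  have h5 : μ * ‖T (v - w)‖ ^ 2 ≤ ‖v - w‖ ^ 2 := by rw [hvw]; exact hup
  have h6 : μ * (α * ‖v‖ ^ 2) ≤ μ * ‖T v‖ ^ 2 := mul_le_mul_of_nonneg_left hlow_v hμ.le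
  have h7 : -(‖e‖ * ‖T w‖) ≤ (inner ℝ e (T w) : ℝ) := by
    have h := abs_real_inner_le_norm e (T w)
    have h' := neg_abs_le (inner ℝ e (T w) : ℝ)
    linarith
  have h7' : μ * (-(‖e‖ * ‖T w‖)) ≤ μ * (inner ℝ e (T w) : ℝ) :=
    mul_le_mul_of_nonneg_left h7 hμ.le
  have hq : μ * ‖T w‖ ^ 2 ≤ ‖v‖ ^ 2 - μ * (α * ‖v‖ ^ 2) + 2 * (μ * (‖e‖ * ‖T w‖)) := by
    linarith
  have hlow_w' : μ * (α * ‖w‖ ^ 2) ≤ μ * ‖T w‖ ^ 2 := mul_le_mul_of_nonneg_left hlow_w hμ.le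
  have hsq2 : 0 ≤ μ * (‖T w‖ - 2 * ‖e‖) ^ 2 := mul_nonneg hμ.le (sq_nonneg _)
  have hmain : μ * α * ‖w‖ ^ 2 ≤ 2 * (1 - μ * α) * ‖v‖ ^ 2 + 4 * μ * ‖e‖ ^ 2 := by
    nlinarith [hq, hlow_w', hsq2]
  have hrw : (2 / (μ * α) - 2) * ‖v‖ ^ 2 + (4 / α) * ‖e‖ ^ 2
      = (2 * (1 - μ * α) * ‖v‖ ^ 2 + 4 * μ * ‖e‖ ^ 2) / (μ * α) := by
    field_simp
  rw [hrw, le_div_iff₀ (by positivity)]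
  nlinarith [hmain]


/-- Under the RIP hypothesis with constants `0 < α ≤ β` satisfying `β ≤ 1/μ`,
setting `a := 2/(μα) − 2`, for every `x` and every `k ≥ 0` the nonlinear IHT iterates satisfy
`‖x − x^k‖ ≤ a^{k/2}‖x_A‖ + √((4/α)·Σ_{n=0}^{k−1} a^{k−1−n}‖e_A^n‖²) + ‖x_A − x‖`. -/
theorem nonlinear_iht_recovery_bound
    {N M : ℕ}
    (Φ : EuclideanSpace ℝ (Fin N) → EuclideanSpace ℝ (Fin M))
    (Φ' : EuclideanSpace ℝ (Fin N) → (EuclideanSpace ℝ (Fin N) →L[ℝ] EuclideanSpace ℝ (Fin M)))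
    (hΦ : ∀ u, HasFDerivAt Φ (Φ' u) u)
    (A : Set (EuclideanSpace ℝ (Fin N))) (hA0 : (0 : EuclideanSpace ℝ (Fin N)) ∈ A)
    (PA : EuclideanSpace ℝ (Fin N) → EuclideanSpace ℝ (Fin N))
    (hPA : ∀ z, PA z ∈ A ∧ ∀ a ∈ A, ‖z - PA z‖ ≤ ‖z - a‖)
    (y : EuclideanSpace ℝ (Fin M)) (μ α β : ℝ)
    (hμ : 0 < μ) (hα : 0 < α) (hαβ : α ≤ β) (hβμ : β ≤ 1 / μ)
    (hRIP : ∀ u ∈ A, ∀ v ∈ A, ∀ w ∈ A,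
      α * ‖u - v‖ ^ 2 ≤ ‖Φ' w (u - v)‖ ^ 2 ∧ ‖Φ' w (u - v)‖ ^ 2 ≤ β * ‖u - v‖ ^ 2)
    (xseq : ℕ → EuclideanSpace ℝ (Fin N)) (hx0 : xseq 0 = 0)
    (hxit : ∀ n, xseq (n + 1) =
      PA (xseq n + μ • (ContinuousLinearMap.adjoint (Φ' (xseq n))) (y - Φ (xseq n))))
    (xA : EuclideanSpace ℝ (Fin N)) (hxA : xA ∈ A)
 :
    ∀ (x : EuclideanSpace ℝ (Fin N)) (k : ℕ), ‖x - xseq k‖ ≤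
      (2 / (μ * α) - 2) ^ ((k : ℝ) / 2) * ‖xA‖ +
        Real.sqrt ((4 / α) * ∑ n ∈ Finset.range k,
          (2 / (μ * α) - 2) ^ (k - 1 - n) * ‖y - Φ (xseq n) - (Φ' (xseq n)) (xA - xseq n)‖ ^ 2) +
        ‖xA - x‖ := by
  have hμβ : μ * β ≤ 1 := by
    have := (le_div_iff₀ hμ).mp hβμ
    linarith [mul_comm β μ]
  have hμα : μ * α ≤ 1 := by nlinarith
  have ha' : (0:ℝ) ≤ 2 / (μ * α) - 2 := by
    have h2 : 2 ≤ 2 / (μ * α) := by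
      rw [le_div_iff₀ (by positivity)]
      linarith
    linarith
  set a : ℝ := 2 / (μ * α) - 2 with ha_def
  have ha : 0 ≤ a := ha'
  have hmem : ∀ n, xseq n ∈ A := by
    intro n
    induction n with
    | zero => rw [hx0]; exact hA0
    | succ n ih => rw [hxit]; exact (hPA _).1
  -- per-step inequality
  have key : ∀ n, ‖xA - xseq (n + 1)‖ ^ 2 ≤ a * ‖xA - xseq n‖ ^ 2
      + (4 / α) * ‖y - Φ (xseq n) - (Φ' (xseq n)) (xA - xseq n)‖ ^ 2 := by
    intro n
    have hproj : ‖xseq n + μ • (ContinuousLinearMap.adjoint (Φ' (xseq n))) (y - Φ (xseq n))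
          - xseq (n + 1)‖ ≤
        ‖xseq n + μ • (ContinuousLinearMap.adjoint (Φ' (xseq n))) (y - Φ (xseq n)) - xA‖ := by
      rw [hxit n]
      exact (hPA _).2 xA hxA
    have hup : μ * ‖(Φ' (xseq n)) (xseq (n + 1) - xseq n)‖ ^ 2 ≤ ‖xseq (n + 1) - xseq n‖ ^ 2 := by
      have h := (hRIP (xseq (n + 1)) (hmem (n + 1)) (xseq n) (hmem n) (xseq n) (hmem n)).2
      nlinarith [sq_nonneg ‖xseq (n + 1) - xseq n‖, mul_le_mul_of_nonneg_left h hμ.le,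
        mul_nonneg (by linarith : (0 : ℝ) ≤ 1 - μ * β) (sq_nonneg ‖xseq (n + 1) - xseq n‖)]
    exact step_aux (Φ' (xseq n)) (xseq n) (xseq (n + 1)) xA (y - Φ (xseq n)) μ α hμ hα hproj
      (hRIP xA hxA (xseq n) (hmem n) (xseq n) (hmem n)).1
      (hRIP xA hxA (xseq (n + 1)) (hmem (n + 1)) (xseq n) (hmem n)).1
      hup
  -- unrolled inequality
  have main : ∀ k, ‖xA - xseq k‖ ^ 2 ≤ a ^ k * ‖xA‖ ^ 2 + (4 / α) * ∑ n ∈ Finset.range k,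
      a ^ (k - 1 - n) * ‖y - Φ (xseq n) - (Φ' (xseq n)) (xA - xseq n)‖ ^ 2 := by
    intro k
    induction k with
    | zero => simp [hx0]
    | succ k ih =>
      have hsum : ∑ n ∈ Finset.range (k + 1),
            a ^ (k + 1 - 1 - n) * ‖y - Φ (xseq n) - (Φ' (xseq n)) (xA - xseq n)‖ ^ 2
          = a * (∑ n ∈ Finset.range k,
              a ^ (k - 1 - n) * ‖y - Φ (xseq n) - (Φ' (xseq n)) (xA - xseq n)‖ ^ 2)
            + ‖y - Φ (xseq k) - (Φ' (xseq k)) (xA - xseq k)‖ ^ 2 := by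
        rw [Finset.sum_range_succ, Finset.mul_sum]
        congr 1
        · refine Finset.sum_congr rfl fun n hn => ?_
          have hn' : n < k := Finset.mem_range.mp hn
          rw [show k + 1 - 1 - n = (k - 1 - n) + 1 from by omega, pow_succ]
          ring
        · rw [show k + 1 - 1 - k = 0 from by omega, pow_zero, one_mul]
      have h1 := key k
      have h3 := mul_le_mul_of_nonneg_left ih ha
      rw [hsum, pow_succ a k]
      linarith [h1, h3]
  intro x k
  set S : ℝ := (4 / α) * ∑ n ∈ Finset.range k,
      a ^ (k - 1 - n) * ‖y - Φ (xseq n) - (Φ' (xseq n)) (xA - xseq n)‖ ^ 2 with hS_def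
  have hS : 0 ≤ S := by
    apply mul_nonneg (by positivity)
    exact Finset.sum_nonneg fun n _ => mul_nonneg (pow_nonneg ha _) (sq_nonneg _)
  have hAk : (0 : ℝ) ≤ a ^ k * ‖xA‖ ^ 2 := mul_nonneg (pow_nonneg ha k) (sq_nonneg _)
  have hstep1 : ‖xA - xseq k‖ ≤ Real.sqrt (a ^ k * ‖xA‖ ^ 2 + S) := by
    rw [← Real.sqrt_sq (norm_nonneg (xA - xseq k))]
    exact Real.sqrt_le_sqrt (main k)
  have hsub : Real.sqrt (a ^ k * ‖xA‖ ^ 2 + S)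
      ≤ Real.sqrt (a ^ k * ‖xA‖ ^ 2) + Real.sqrt S := by
    rw [← Real.sqrt_sq (by positivity : (0:ℝ) ≤ Real.sqrt (a ^ k * ‖xA‖ ^ 2) + Real.sqrt S)]
    apply Real.sqrt_le_sqrt
    have e1 : Real.sqrt (a ^ k * ‖xA‖ ^ 2) ^ 2 = a ^ k * ‖xA‖ ^ 2 := Real.sq_sqrt hAk
    have e2 : Real.sqrt S ^ 2 = S := Real.sq_sqrt hS
    nlinarith [mul_nonneg (Real.sqrt_nonneg (a ^ k * ‖xA‖ ^ 2)) (Real.sqrt_nonneg S)]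
  have hsqrtA : Real.sqrt (a ^ k * ‖xA‖ ^ 2) = a ^ ((k : ℝ) / 2) * ‖xA‖ := by
    rw [Real.sqrt_mul (pow_nonneg ha k), Real.sqrt_sq (norm_nonneg _)]
    congr 1
    rw [show (k : ℝ) / 2 = (k : ℝ) * (1 / 2) by ring, Real.rpow_mul ha,
      Real.rpow_natCast, ← Real.sqrt_eq_rpow]
  have htri : ‖x - xseq k‖ ≤ ‖xA - x‖ + ‖xA - xseq k‖ := by
    calc ‖x - xseq k‖ = ‖(x - xA) + (xA - xseq k)‖ := by congr 1; abel
      _ ≤ ‖x - xA‖ + ‖xA - xseq k‖ := norm_add_le _ _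
      _ = ‖xA - x‖ + ‖xA - xseq k‖ := by rw [norm_sub_rev]
  calc ‖x - xseq k‖ ≤ ‖xA - x‖ + ‖xA - xseq k‖ := htri
    _ ≤ ‖xA - x‖ + (Real.sqrt (a ^ k * ‖xA‖ ^ 2) + Real.sqrt S) := by
        linarith [hstep1.trans hsub]
    _ = a ^ ((k : ℝ) / 2) * ‖xA‖ + Real.sqrt S + ‖xA - x‖ := by rw [hsqrtA]; ring
end

section
/- Under the RIP hypothesis with constants 0 < α ≤ β satisfying β ≤ 1/μ, the IHT iterates satisfy, for every n ≥ 0, the per-iteration bound ‖x_A − x^{n+1}‖² ≤ 2·(1/(μα) − 1)·‖x_A − x^n‖² + (4/α)·‖e_A^n‖². -/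
set_option maxHeartbeats 2000000 in
/-- Under the RIP hypothesis with constants `0 < α ≤ β` satisfying `β ≤ 1/μ`,
the nonlinear IHT iterates satisfy, for every `n ≥ 0`, the per-iteration bound
`‖x_A − x^{n+1}‖² ≤ 2(1/(μα) − 1)‖x_A − x^n‖² + (4/α)‖e_A^n‖²`. -/
theorem nonlinear_iht_per_iteration_bound
    {N M : ℕ}
    (Φ : EuclideanSpace ℝ (Fin N) → EuclideanSpace ℝ (Fin M))
    (Φ' : EuclideanSpace ℝ (Fin N) → (EuclideanSpace ℝ (Fin N) →L[ℝ] EuclideanSpace ℝ (Fin M)))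
    (hΦ : ∀ u, HasFDerivAt Φ (Φ' u) u)
    (A : Set (EuclideanSpace ℝ (Fin N))) (hA0 : (0 : EuclideanSpace ℝ (Fin N)) ∈ A)
    (PA : EuclideanSpace ℝ (Fin N) → EuclideanSpace ℝ (Fin N))
    (hPA : ∀ z, PA z ∈ A ∧ ∀ a ∈ A, ‖z - PA z‖ ≤ ‖z - a‖)
    (y : EuclideanSpace ℝ (Fin M)) (μ α β : ℝ)
    (hμ : 0 < μ) (hα : 0 < α) (hαβ : α ≤ β) (hβμ : β ≤ 1 / μ)
    (hRIP : ∀ u ∈ A, ∀ v ∈ A, ∀ w ∈ A,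
      α * ‖u - v‖ ^ 2 ≤ ‖Φ' w (u - v)‖ ^ 2 ∧ ‖Φ' w (u - v)‖ ^ 2 ≤ β * ‖u - v‖ ^ 2)
    (xseq : ℕ → EuclideanSpace ℝ (Fin N)) (hx0 : xseq 0 = 0)
    (hxit : ∀ n, xseq (n + 1) =
      PA (xseq n + μ • (ContinuousLinearMap.adjoint (Φ' (xseq n))) (y - Φ (xseq n))))
    (xA : EuclideanSpace ℝ (Fin N)) (hxA : xA ∈ A)
 :
    ∀ n : ℕ, ‖xA - xseq (n + 1)‖ ^ 2 ≤
      2 * (1 / (μ * α) - 1) * ‖xA - xseq n‖ ^ 2 +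
        (4 / α) * ‖y - Φ (xseq n) - (Φ' (xseq n)) (xA - xseq n)‖ ^ 2 := by
  have hmem : ∀ n, xseq n ∈ A := by
    intro n
    cases n with
    | zero => rw [hx0]; exact hA0
    | succ k => rw [hxit]; exact (hPA _).1
  intro n
  set xn := xseq n with hxn
  set x' := xseq (n + 1) with hx'
  set T := Φ' xn with hT
  set r := y - Φ xn with hr
  set a := xA - xn with ha
  have hgoal : y - Φ xn - T (xA - xn) = r - T a := by rw [hr, ha]
  rw [hgoal]
  set d := xA - x' with hd
  set e := r - T a with he
  set z := xn + μ • (ContinuousLinearMap.adjoint T) r with hz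
  -- projection inequality
  have hproj : ‖z - x'‖ ≤ ‖z - xA‖ := by
    rw [hx', hxit]
    exact (hPA z).2 xA hxA
  have hsq : ‖(z - xA) + d‖ ^ 2 ≤ ‖z - xA‖ ^ 2 := by
    have : (z - xA) + d = z - x' := by rw [hd]; abel
    rw [this]
    exact pow_le_pow_left₀ (norm_nonneg _) hproj 2
  rw [norm_add_sq_real] at hsq
  -- compute the inner product
  have hre : r = T a + e := by rw [he]; abel
  have h1 : z - xA = -a + μ • ((ContinuousLinearMap.adjoint T) r) := by
    rw [hz, ha]; abel
  have hinner : (inner ℝ (z - xA) (d) : ℝ) = -(inner ℝ (a) (d) : ℝ) + μ * ((inner ℝ (T a) (T d) : ℝ) + (inner ℝ (e) (T d) : ℝ)) := by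
    rw [h1, inner_add_left, inner_neg_left, real_inner_smul_left,
      ContinuousLinearMap.adjoint_inner_left, hre, inner_add_left]
  rw [hinner] at hsq
  -- polarization identities
  have F2 : ‖a - d‖ ^ 2 = ‖a‖ ^ 2 - 2 * (inner ℝ (a) (d) : ℝ) + ‖d‖ ^ 2 := norm_sub_sq_real a d
  have F3 : ‖T (a - d)‖ ^ 2 = ‖T a‖ ^ 2 - 2 * (inner ℝ (T a) (T d) : ℝ) + ‖T d‖ ^ 2 := by
    rw [map_sub]; exact norm_sub_sq_real _ _
  -- RIP facts
  have F4 : α * ‖a‖ ^ 2 ≤ ‖T a‖ ^ 2 := (hRIP xA hxA xn (hmem n) xn (hmem n)).1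
  have F5 : α * ‖d‖ ^ 2 ≤ ‖T d‖ ^ 2 := (hRIP xA hxA x' (hmem (n + 1)) xn (hmem n)).1
  have had : a - d = x' - xn := by rw [ha, hd]; abel
  have F6 : ‖T (a - d)‖ ^ 2 ≤ β * ‖a - d‖ ^ 2 := by
    rw [had]; exact (hRIP x' (hmem (n + 1)) xn (hmem n) xn (hmem n)).2
  have F7 : -(‖e‖ * ‖T d‖) ≤ (inner ℝ (e) (T d) : ℝ) :=
    (abs_le.mp (abs_real_inner_le_norm e (T d))).1
  have F8 : μ * β ≤ 1 := by
    have := (le_div_iff₀ hμ).mp hβμ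
    linarith
  have F9 : μ * α ≤ 1 := le_trans (by nlinarith) F8
  -- combine: μ‖Td‖² ≤ (1-μα)‖a‖² + 2μ‖e‖‖Td‖
  have hTd : μ * ‖T d‖ ^ 2 ≤ (1 - μ * α) * ‖a‖ ^ 2 + 2 * μ * (‖e‖ * ‖T d‖) := by
    nlinarith [mul_le_mul_of_nonneg_left F4 hμ.le,
      mul_le_mul_of_nonneg_left F6 hμ.le,
      mul_le_mul_of_nonneg_right F8 (sq_nonneg ‖a - d‖),
      mul_le_mul_of_nonneg_left F7 hμ.le, hsq, F2, F3]
  have hμα : (0 : ℝ) < μ * α := mul_pos hμ hα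
  rw [← mul_le_mul_iff_right₀ hμα]
  have hrhs : μ * α * (2 * (1 / (μ * α) - 1) * ‖a‖ ^ 2 + 4 / α * ‖e‖ ^ 2)
      = 2 * (1 - μ * α) * ‖a‖ ^ 2 + 4 * μ * ‖e‖ ^ 2 := by
    field_simp
  rw [hrhs]
  nlinarith [mul_le_mul_of_nonneg_left F5 hμ.le, hTd,
    mul_nonneg hμ.le (sq_nonneg (‖T d‖ - 2 * ‖e‖)), sq_nonneg ‖a‖, hμα]
end

section
/- Under the RIP hypothesis with constants 0 < α ≤ β satisfying β ≤ 1/μ, the IHT iterates satisfy, for every n ≥ 0, ‖y − Φ(x^n) − Φ_{x^n}(x^{n+1} − x^n)‖² ≤ (1/μ − α)·‖x_A − x^n‖² + ‖e_A^n‖². -/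
/-- Under the RIP hypothesis with constants `0 < α ≤ β` satisfying `β ≤ 1/μ`,
the nonlinear IHT iterates satisfy, for every `n ≥ 0`,
`‖y − Φ(x^n) − Φ_{x^n}(x^{n+1} − x^n)‖² ≤ (1/μ − α)‖x_A − x^n‖² + ‖e_A^n‖²`. -/
theorem nonlinear_iht_residual_bound
    {N M : ℕ}
    (Φ : EuclideanSpace ℝ (Fin N) → EuclideanSpace ℝ (Fin M))
    (Φ' : EuclideanSpace ℝ (Fin N) → (EuclideanSpace ℝ (Fin N) →L[ℝ] EuclideanSpace ℝ (Fin M)))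
    (hΦ : ∀ u, HasFDerivAt Φ (Φ' u) u)
    (A : Set (EuclideanSpace ℝ (Fin N))) (hA0 : (0 : EuclideanSpace ℝ (Fin N)) ∈ A)
    (PA : EuclideanSpace ℝ (Fin N) → EuclideanSpace ℝ (Fin N))
    (hPA : ∀ z, PA z ∈ A ∧ ∀ a ∈ A, ‖z - PA z‖ ≤ ‖z - a‖)
    (y : EuclideanSpace ℝ (Fin M)) (μ α β : ℝ)
    (hμ : 0 < μ) (hα : 0 < α) (hαβ : α ≤ β) (hβμ : β ≤ 1 / μ)
    (hRIP : ∀ u ∈ A, ∀ v ∈ A, ∀ w ∈ A,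
      α * ‖u - v‖ ^ 2 ≤ ‖Φ' w (u - v)‖ ^ 2 ∧ ‖Φ' w (u - v)‖ ^ 2 ≤ β * ‖u - v‖ ^ 2)
    (xseq : ℕ → EuclideanSpace ℝ (Fin N)) (hx0 : xseq 0 = 0)
    (hxit : ∀ n, xseq (n + 1) =
      PA (xseq n + μ • (ContinuousLinearMap.adjoint (Φ' (xseq n))) (y - Φ (xseq n))))
    (xA : EuclideanSpace ℝ (Fin N)) (hxA : xA ∈ A)
 :
    ∀ n : ℕ, ‖y - Φ (xseq n) - (Φ' (xseq n)) (xseq (n + 1) - xseq n)‖ ^ 2 ≤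
      (1 / μ - α) * ‖xA - xseq n‖ ^ 2 +
        ‖y - Φ (xseq n) - (Φ' (xseq n)) (xA - xseq n)‖ ^ 2 := by

  have hmem : ∀ n, xseq n ∈ A := by
    intro n
    cases n with
    | zero => rw [hx0]; exact hA0
    | succ n => rw [hxit]; exact (hPA _).1
  intro n
  set L := Φ' (xseq n) with hL
  set r := y - Φ (xseq n) with hr
  set p := ContinuousLinearMap.adjoint L r with hp
  set u := xseq (n + 1) - xseq n with hu
  set v := xA - xseq n with hv
  have hproj : ‖μ • p - u‖ ^ 2 ≤ ‖μ • p - v‖ ^ 2 := by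
    have h := (hPA (xseq n + μ • p)).2 xA hxA
    rw [← hxit n] at h
    have e1 : xseq n + μ • p - xseq (n + 1) = μ • p - u := by rw [hu]; abel
    have e2 : xseq n + μ • p - xA = μ • p - v := by rw [hv]; abel
    rw [e1, e2] at h
    exact pow_le_pow_left₀ (norm_nonneg _) h 2
  have expand : ∀ w : EuclideanSpace ℝ (Fin N),
      ‖μ • p - w‖ ^ 2 = μ ^ 2 * ‖p‖ ^ 2 - 2 * (μ * inner ℝ p w) + ‖w‖ ^ 2 := by
    intro w
    rw [norm_sub_sq_real, norm_smul, real_inner_smul_left]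
    simp [Real.norm_eq_abs, mul_pow, sq_abs]
  have hadj : ∀ w : EuclideanSpace ℝ (Fin N), (inner ℝ p w : ℝ) = inner ℝ r (L w) := by
    intro w
    rw [hp]
    exact ContinuousLinearMap.adjoint_inner_left L w r
  have hproj' : - (2 * (μ * inner ℝ r (L u))) + ‖u‖ ^ 2 ≤
      - (2 * (μ * inner ℝ r (L v))) + ‖v‖ ^ 2 := by
    rw [expand u, expand v, hadj u, hadj v] at hproj
    linarith
  have hRIPu := (hRIP (xseq (n + 1)) (hmem (n + 1)) (xseq n) (hmem n) (xseq n) (hmem n)).2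
  have hRIPv := (hRIP xA hxA (xseq n) (hmem n) (xseq n) (hmem n)).1
  rw [← hL] at hRIPu hRIPv
  rw [← hv] at hRIPv
  rw [show y - Φ (xseq n) - L u = r - L u from rfl,
    show y - Φ (xseq n) - L v = r - L v from rfl,
    norm_sub_sq_real (r : EuclideanSpace ℝ (Fin M)) (L u),
    norm_sub_sq_real (r : EuclideanSpace ℝ (Fin M)) (L v)]
  have hμne : μ ≠ 0 := ne_of_gt hμ
  have hβμ' : β * μ ≤ 1 := by
    rw [le_div_iff₀ hμ] at hβμ; linarith
  have hLu : ‖L u‖ ^ 2 * μ ≤ ‖u‖ ^ 2 := by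
    nlinarith [sq_nonneg ‖u‖, mul_le_mul_of_nonneg_right hRIPu hμ.le]
  have hLu' : ‖L u‖ ^ 2 ≤ ‖u‖ ^ 2 / μ := (le_div_iff₀ hμ).mpr hLu
  have hμpos : (0:ℝ) < 1 / μ := one_div_pos.mpr hμ
  have f1 := mul_le_mul_of_nonneg_left
    (show 2 * (μ * (inner ℝ r (L v) : ℝ)) - 2 * (μ * (inner ℝ r (L u) : ℝ)) ≤ ‖v‖ ^ 2 - ‖u‖ ^ 2
      by linarith) hμpos.le
  have f1' : 2 * (inner ℝ r (L v) : ℝ) - 2 * (inner ℝ r (L u) : ℝ) ≤ ‖v‖ ^ 2 / μ - ‖u‖ ^ 2 / μ := by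
    have e : (1 / μ) * (2 * (μ * (inner ℝ r (L v) : ℝ)) - 2 * (μ * (inner ℝ r (L u) : ℝ)))
        = 2 * (inner ℝ r (L v) : ℝ) - 2 * (inner ℝ r (L u) : ℝ) := by
      field_simp
    have e2 : (1 / μ) * (‖v‖ ^ 2 - ‖u‖ ^ 2) = ‖v‖ ^ 2 / μ - ‖u‖ ^ 2 / μ := by
      field_simp
    rw [e, e2] at f1
    exact f1
  have e3 : (1 / μ - α) * ‖v‖ ^ 2 = ‖v‖ ^ 2 / μ - α * ‖v‖ ^ 2 := by
    field_simp
  linarith [f1', hLu', hRIPv, e3]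
end

section
/- Assume the RIP hypothesis with constants 0 < α ≤ β satisfying β ≤ 1/μ, and assume in addition the linearization-error bound ‖Φ(u) − Φ(v) − Φ_{u}(u − v)‖² ≤ C·‖u − v‖² for all u, v ∈ A, where C ≥ 0. Set e_A := y − Φ(x_A). Then the IHT iterates satisfy, for every n ≥ 0, ‖x_A − x^{n+1}‖² ≤ 2·(1/(μα) − 1 + 4C/α)·‖x_A − x^n‖² + (8/α)·‖e_A‖². -/
open RealInnerProductSpace


/-- Under the RIP hypothesis with `0 < α ≤ β ≤ 1/μ` and the linearization-error
bound `‖Φ(u) − Φ(v) − Φ_u(u − v)‖² ≤ C‖u − v‖²` on `A` with `C ≥ 0`, with `e_A := y − Φ(x_A)`,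
the nonlinear IHT iterates satisfy, for every `n ≥ 0`,
`‖x_A − x^{n+1}‖² ≤ 2(1/(μα) − 1 + 4C/α)‖x_A − x^n‖² + (8/α)‖e_A‖²`. -/
theorem nonlinear_iht_per_iteration_bound_of_linearization_error
    {N M : ℕ}
    (Φ : EuclideanSpace ℝ (Fin N) → EuclideanSpace ℝ (Fin M))
    (Φ' : EuclideanSpace ℝ (Fin N) → (EuclideanSpace ℝ (Fin N) →L[ℝ] EuclideanSpace ℝ (Fin M)))
    (hΦ : ∀ u, HasFDerivAt Φ (Φ' u) u)
    (A : Set (EuclideanSpace ℝ (Fin N))) (hA0 : (0 : EuclideanSpace ℝ (Fin N)) ∈ A)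
    (PA : EuclideanSpace ℝ (Fin N) → EuclideanSpace ℝ (Fin N))
    (hPA : ∀ z, PA z ∈ A ∧ ∀ a ∈ A, ‖z - PA z‖ ≤ ‖z - a‖)
    (y : EuclideanSpace ℝ (Fin M)) (μ α β : ℝ)
    (hμ : 0 < μ) (hα : 0 < α) (hαβ : α ≤ β) (hβμ : β ≤ 1 / μ)
    (hRIP : ∀ u ∈ A, ∀ v ∈ A, ∀ w ∈ A,
      α * ‖u - v‖ ^ 2 ≤ ‖Φ' w (u - v)‖ ^ 2 ∧ ‖Φ' w (u - v)‖ ^ 2 ≤ β * ‖u - v‖ ^ 2)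
    (xseq : ℕ → EuclideanSpace ℝ (Fin N)) (hx0 : xseq 0 = 0)
    (hxit : ∀ n, xseq (n + 1) =
      PA (xseq n + μ • (ContinuousLinearMap.adjoint (Φ' (xseq n))) (y - Φ (xseq n))))
    (xA : EuclideanSpace ℝ (Fin N)) (hxA : xA ∈ A)
    (C : ℝ) (hC : 0 ≤ C)
    (hlin : ∀ u ∈ A, ∀ v ∈ A, ‖Φ u - Φ v - (Φ' u) (u - v)‖ ^ 2 ≤ C * ‖u - v‖ ^ 2) :
    ∀ n : ℕ, ‖xA - xseq (n + 1)‖ ^ 2 ≤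
      2 * (1 / (μ * α) - 1 + 4 * C / α) * ‖xA - xseq n‖ ^ 2 +
        (8 / α) * ‖y - Φ xA‖ ^ 2 := by
  have sq2 : ∀ a b c : ℝ, 0 ≤ a → 0 ≤ b → 0 ≤ c → a ≤ b + c → a ^ 2 ≤ 2 * b ^ 2 + 2 * c ^ 2 := by
    intro a b c ha hb hc habc
    nlinarith [sq_nonneg (b - c), sq_nonneg (b + c - a)]
  have hmem : ∀ k, xseq k ∈ A := by
    intro k
    cases k with
    | zero => rw [hx0]; exact hA0
    | succ m => rw [hxit m]; exact (hPA _).1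
  intro n
  have hμβ : μ * β ≤ 1 := by
    have := mul_le_mul_of_nonneg_left hβμ hμ.le
    rwa [mul_one_div, div_self (ne_of_gt hμ)] at this
  set x := xseq n with hxd
  set p := xseq (n+1) with hpd
  have hxmem : x ∈ A := hmem n
  have hpmem : p ∈ A := hmem (n+1)
  set T := Φ' x with hT
  set g := y - Φ x with hg
  set u := x + μ • (ContinuousLinearMap.adjoint T) g with hud
  have hx1 : p = PA u := hxit n
  have hproj : ‖u - p‖ ≤ ‖u - xA‖ := by
    rw [hx1]; exact (hPA u).2 xA hxA
  set h := xA - p with hh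
  set w := xA - x with hw
  set e := g - T w with he
  -- Step 1: projection optimality
  have hproj2 : ‖u - p‖ ^ 2 ≤ ‖u - xA‖ ^ 2 := by
    exact pow_le_pow_left₀ (norm_nonneg _) hproj 2
  have hup : u - p = (u - xA) + h := by rw [hh]; abel
  have hexp : ‖u - p‖ ^ 2 = ‖u - xA‖ ^ 2 + 2 * ⟪u - xA, h⟫ + ‖h‖ ^ 2 := by
    rw [hup]; exact norm_add_sq_real _ _
  have step1 : ‖h‖ ^ 2 ≤ -(2 * ⟪u - xA, h⟫) := by linarith
  have hinner : ⟪u - xA, h⟫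
      = -⟪w, h⟫ + μ * (⟪T w, T h⟫ + ⟪e, T h⟫) := by
    have h1 : u - xA = -w + μ • (ContinuousLinearMap.adjoint T) g := by
      rw [hud, hw]; abel
    have h2 : g = T w + e := by rw [he]; abel
    rw [h1, inner_add_left, inner_neg_left, real_inner_smul_left,
      ContinuousLinearMap.adjoint_inner_left, h2, inner_add_left]
  have S1 : ‖h‖ ^ 2 ≤ 2 * ⟪w, h⟫ - 2 * μ * ⟪T w, T h⟫ - 2 * μ * ⟪e, T h⟫ := by
    rw [hinner] at step1; linarith
  -- polarization identity pieces
  have hhw : h - w = x - p := by rw [hh, hw]; abel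
  have id1 : ‖x - p‖ ^ 2 = ‖h‖ ^ 2 - 2 * ⟪h, w⟫ + ‖w‖ ^ 2 := by
    rw [← hhw]; exact norm_sub_sq_real h w
  have hqT : T h - T w = T (x - p) := by rw [← map_sub, hhw]
  have id2 : ‖T (x - p)‖ ^ 2 = ‖T h‖ ^ 2 - 2 * ⟪T h, T w⟫ + ‖T w‖ ^ 2 := by
    rw [← hqT]; exact norm_sub_sq_real _ _
  have id2μ : μ * ‖T (x - p)‖ ^ 2
      = μ * ‖T h‖ ^ 2 - 2 * (μ * ⟪T h, T w⟫) + μ * ‖T w‖ ^ 2 := by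
    rw [id2]; ring
  have comm1 : ⟪h, w⟫ = ⟪w, h⟫ := real_inner_comm w h
  have comm2μ : μ * ⟪T h, T w⟫ = μ * ⟪T w, T h⟫ := by rw [real_inner_comm]
  -- RIP consequences
  have R2' : μ * ‖T (x - p)‖ ^ 2 ≤ ‖x - p‖ ^ 2 := by
    have r2 : ‖T (x - p)‖ ^ 2 ≤ β * ‖x - p‖ ^ 2 := (hRIP x hxmem p hpmem x hxmem).2
    have h1 := mul_le_mul_of_nonneg_left r2 hμ.le
    have h2 := mul_le_mul_of_nonneg_right hμβ (sq_nonneg ‖x - p‖)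
    linarith
  have r3 : α * ‖w‖ ^ 2 ≤ ‖T w‖ ^ 2 := (hRIP xA hxA x hxmem x hxmem).1
  have R3' : μ * (α * ‖w‖ ^ 2) ≤ μ * ‖T w‖ ^ 2 := mul_le_mul_of_nonneg_left r3 hμ.le
  have key : μ * ‖T h‖ ^ 2 + 2 * μ * ⟪e, T h⟫ ≤ (1 - μ * α) * ‖w‖ ^ 2 := by
    linarith [S1, id1, id2μ, comm1, comm2μ, R2', R3']
  -- complete the square
  have idp : ‖T h + e‖ ^ 2 = ‖T h‖ ^ 2 + 2 * ⟪T h, e⟫ + ‖e‖ ^ 2 := norm_add_sq_real _ _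
  have idpμ : μ * ‖T h + e‖ ^ 2
      = μ * ‖T h‖ ^ 2 + 2 * (μ * ⟪T h, e⟫) + μ * ‖e‖ ^ 2 := by rw [idp]; ring
  have commEμ : μ * ⟪T h, e⟫ = μ * ⟪e, T h⟫ := by rw [real_inner_comm]
  have S3 : μ * ‖T h + e‖ ^ 2 ≤ (1 - μ * α) * ‖w‖ ^ 2 + μ * ‖e‖ ^ 2 := by
    linarith [key, idpμ, commEμ]
  have S3' : ‖T h + e‖ ^ 2 ≤ (1 / μ - α) * ‖w‖ ^ 2 + ‖e‖ ^ 2 := by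
    have hrhs : μ * ((1 / μ - α) * ‖w‖ ^ 2 + ‖e‖ ^ 2)
        = (1 - μ * α) * ‖w‖ ^ 2 + μ * ‖e‖ ^ 2 := by
      field_simp
    have : μ * ‖T h + e‖ ^ 2 ≤ μ * ((1 / μ - α) * ‖w‖ ^ 2 + ‖e‖ ^ 2) := by
      rw [hrhs]; exact S3
    exact le_of_mul_le_mul_left this hμ
  have tri1 : ‖T h‖ ^ 2 ≤ 2 * ‖T h + e‖ ^ 2 + 2 * ‖e‖ ^ 2 := by
    have htr : ‖T h‖ ≤ ‖T h + e‖ + ‖e‖ := by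
      have := norm_sub_le (T h + e) e
      simpa using this
    exact sq2 _ _ _ (norm_nonneg _) (norm_nonneg _) (norm_nonneg _) htr
  have R1 : α * ‖h‖ ^ 2 ≤ ‖T h‖ ^ 2 := (hRIP xA hxA p hpmem x hxmem).1
  have S4 : α * ‖h‖ ^ 2 ≤ (2 / μ - 2 * α) * ‖w‖ ^ 2 + 4 * ‖e‖ ^ 2 := by
    have e1 : (2 / μ - 2 * α) * ‖w‖ ^ 2 = 2 * ((1 / μ - α) * ‖w‖ ^ 2) := by ring
    linarith [R1, tri1, S3', e1]
  -- linearization error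
  set d := Φ xA - Φ x - T w with hd
  have hed : e = (y - Φ xA) + d := by rw [he, hg, hd, hw]; abel
  have hdb : ‖d‖ ^ 2 ≤ C * ‖w‖ ^ 2 := by
    have hl := hlin x hxmem xA hxA
    rw [← hT] at hl
    have h1 : Φ x - Φ xA - T (x - xA) = -d := by
      rw [hd, hw]; simp only [map_sub]; abel
    have h2 : ‖x - xA‖ = ‖w‖ := by rw [hw, norm_sub_rev]
    rw [h1, norm_neg, h2] at hl
    exact hl
  have S5 : ‖e‖ ^ 2 ≤ 2 * ‖y - Φ xA‖ ^ 2 + 2 * (C * ‖w‖ ^ 2) := by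
    have htr : ‖e‖ ≤ ‖y - Φ xA‖ + ‖d‖ := by rw [hed]; exact norm_add_le _ _
    have := sq2 _ _ _ (norm_nonneg e) (norm_nonneg (y - Φ xA)) (norm_nonneg d) htr
    linarith [hdb]
  have main : α * ‖h‖ ^ 2 ≤ (2 / μ - 2 * α + 8 * C) * ‖w‖ ^ 2 + 8 * ‖y - Φ xA‖ ^ 2 := by
    have e2 : (2 / μ - 2 * α + 8 * C) * ‖w‖ ^ 2
        = (2 / μ - 2 * α) * ‖w‖ ^ 2 + 8 * (C * ‖w‖ ^ 2) := by ring
    linarith [S4, S5, e2]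
  have hfin : 2 * (1 / (μ * α) - 1 + 4 * C / α) * ‖w‖ ^ 2 + (8 / α) * ‖y - Φ xA‖ ^ 2
      = ((2 / μ - 2 * α + 8 * C) * ‖w‖ ^ 2 + 8 * ‖y - Φ xA‖ ^ 2) / α := by
    field_simp; ring
  rw [hfin, le_div_iff₀ hα]
  linarith [main]
end

section
/- Assume the RIP hypothesis with constants 0 < α ≤ β satisfying β ≤ 1/μ, assume the linearization-error bound ‖Φ(u) − Φ(v) − Φ_{u}(u − v)‖² ≤ C·‖u − v‖² for all u, v ∈ A with C ≥ 0, and assume 1/μ < (3/2)α − 4C. Set e_A := y − Φ(x_A). Then for every x ∈ H the IHT iterates satisfy limsup_{n→∞} ‖x − x^n‖ ≤ (2/√((3/2)α − 1/μ − 4C))·‖e_A‖ + ‖x_A − x‖. -/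
open scoped RealInnerProductSpace

lemma iht_arith (μ α C E I1 I2 I3 I4 ng w Du Dv p q s m : ℝ)
    (hμ : 0 < μ)
    (h1 : w ^ 2 + 2 * (μ * I1) + μ ^ 2 * ng ^ 2 ≤ Du ^ 2 + 2 * (μ * I2) + μ ^ 2 * ng ^ 2)
    (eq1 : I1 = I2 + I3 + I4)
    (hpolar : 2 * I3 = p ^ 2 + q ^ 2 - s ^ 2)
    (hstep2 : μ * s ^ 2 ≤ w ^ 2)
    (habs : |I4| ≤ p * m)
    (heE : m ^ 2 ≤ 2 * E ^ 2 + 2 * C * Du ^ 2)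
    (hlow_d : α * Du ^ 2 ≤ q ^ 2)
    (hlow_r : α * Dv ^ 2 ≤ p ^ 2) :
    (α / 2) * Dv ^ 2 ≤ (1 / μ - α + 4 * C) * Du ^ 2 + 4 * E ^ 2 := by
  have hI4 : -(p * m) ≤ I4 := neg_le_of_abs_le habs
  have key : μ * (p ^ 2 + q ^ 2) ≤ Du ^ 2 + 2 * μ * (p * m) := by nlinarith
  have h2pm : 2 * (p * m) ≤ p ^ 2 / 2 + 2 * m ^ 2 := by nlinarith [sq_nonneg (p - 2 * m)]
  have key2 : μ * (p ^ 2 / 2) ≤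
      Du ^ 2 - μ * (α * Du ^ 2) + μ * (2 * (2 * E ^ 2 + 2 * C * Du ^ 2)) := by
    nlinarith [mul_le_mul_of_nonneg_left h2pm hμ.le, mul_le_mul_of_nonneg_left hlow_d hμ.le,
      mul_le_mul_of_nonneg_left heE hμ.le]
  have key3 : μ * ((α / 2) * Dv ^ 2) ≤ μ * (p ^ 2 / 2) :=
    mul_le_mul_of_nonneg_left (by linarith) hμ.le
  have hμinv : μ * (1 / μ) = 1 := mul_one_div_cancel hμ.ne'
  rw [← mul_le_mul_iff_right₀ hμ]
  have hexp : μ * ((1 / μ - α + 4 * C) * Du ^ 2 + 4 * E ^ 2) =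
      μ * (1 / μ) * Du ^ 2 - μ * (α * Du ^ 2) + 4 * (μ * (C * Du ^ 2)) + 4 * (μ * E ^ 2) := by
    ring
  rw [hexp, hμinv, one_mul]
  nlinarith [key2, key3]

lemma iht_step {N M : ℕ}
    (T : EuclideanSpace ℝ (Fin N) →L[ℝ] EuclideanSpace ℝ (Fin M))
    (u v xA : EuclideanSpace ℝ (Fin N)) (yΦ e : EuclideanSpace ℝ (Fin M))
    (μ α β C E : ℝ) (hμ : 0 < μ) (hβμ : μ * β ≤ 1)
    (he : yΦ = T (xA - u) + e)
    (heE : ‖e‖ ^ 2 ≤ 2 * E ^ 2 + 2 * C * ‖xA - u‖ ^ 2)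
    (hproj : ‖(u + μ • (ContinuousLinearMap.adjoint T) yΦ) - v‖ ≤
      ‖(u + μ • (ContinuousLinearMap.adjoint T) yΦ) - xA‖)
    (hlow_d : α * ‖xA - u‖ ^ 2 ≤ ‖T (xA - u)‖ ^ 2)
    (hlow_r : α * ‖xA - v‖ ^ 2 ≤ ‖T (xA - v)‖ ^ 2)
    (hup : ‖T (u - v)‖ ^ 2 ≤ β * ‖u - v‖ ^ 2) :
    (α / 2) * ‖xA - v‖ ^ 2 ≤ (1 / μ - α + 4 * C) * ‖xA - u‖ ^ 2 + 4 * E ^ 2 := by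
  set g := (ContinuousLinearMap.adjoint T) yΦ with hg
  have h1 : ‖(u + μ • g) - v‖ ^ 2 ≤ ‖(u + μ • g) - xA‖ ^ 2 :=
    pow_le_pow_left₀ (norm_nonneg _) hproj 2
  have expand : ∀ a : EuclideanSpace ℝ (Fin N),
      ‖a + μ • g‖ ^ 2 = ‖a‖ ^ 2 + 2 * (μ * ⟪a, g⟫) + μ ^ 2 * ‖g‖ ^ 2 := by
    intro a
    rw [norm_add_sq_real, real_inner_smul_right, norm_smul, Real.norm_eq_abs,
      abs_of_pos hμ, mul_pow]
  rw [add_sub_right_comm u (μ • g) v, add_sub_right_comm u (μ • g) xA, expand, expand,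
    norm_sub_rev u xA] at h1
  have hsplit : ⟪u - v, g⟫ - ⟪u - xA, g⟫ = ⟪xA - v, g⟫ := by
    rw [← inner_sub_left]
    congr 1
    abel
  have hrg : ⟪xA - v, g⟫ = ⟪T (xA - v), T (xA - u)⟫ + ⟪T (xA - v), e⟫ := by
    rw [hg, ContinuousLinearMap.adjoint_inner_right, he, inner_add_right]
  have eq1 : ⟪u - v, g⟫ = ⟪u - xA, g⟫ + ⟪T (xA - v), T (xA - u)⟫ + ⟪T (xA - v), e⟫ := by
    rw [add_assoc, ← hrg, ← hsplit]
    ring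
  have hpolar : 2 * ⟪T (xA - v), T (xA - u)⟫ =
      ‖T (xA - v)‖ ^ 2 + ‖T (xA - u)‖ ^ 2 - ‖T (u - v)‖ ^ 2 := by
    have h := norm_sub_sq_real (T (xA - v)) (T (xA - u))
    have h2 : T (xA - v) - T (xA - u) = T (u - v) := by
      rw [← map_sub]
      congr 1
      abel
    rw [h2] at h
    linarith
  have hstep2 : μ * ‖T (u - v)‖ ^ 2 ≤ ‖u - v‖ ^ 2 := by
    have h1' : μ * ‖T (u - v)‖ ^ 2 ≤ μ * (β * ‖u - v‖ ^ 2) :=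
      mul_le_mul_of_nonneg_left hup hμ.le
    have h2' : (μ * β) * ‖u - v‖ ^ 2 ≤ 1 * ‖u - v‖ ^ 2 :=
      mul_le_mul_of_nonneg_right hβμ (sq_nonneg _)
    nlinarith
  have habs : |⟪T (xA - v), e⟫| ≤ ‖T (xA - v)‖ * ‖e‖ := abs_real_inner_le_norm _ _
  exact iht_arith μ α C E ⟪u - v, g⟫ ⟪u - xA, g⟫ ⟪T (xA - v), T (xA - u)⟫ ⟪T (xA - v), e⟫
    ‖g‖ ‖u - v‖ ‖xA - u‖ ‖xA - v‖ ‖T (xA - v)‖ ‖T (xA - u)‖ ‖T (u - v)‖ ‖e‖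
    hμ h1 eq1 hpolar hstep2 habs heE hlow_d hlow_r

set_option maxHeartbeats 1000000 in
/-- Under the RIP hypothesis with `0 < α ≤ β ≤ 1/μ`, the linearization-error
bound `‖Φ(u) − Φ(v) − Φ_u(u − v)‖² ≤ C‖u − v‖²` on `A` with `C ≥ 0`, and `1/μ < (3/2)α − 4C`,
with `e_A := y − Φ(x_A)`, for every `x` the nonlinear IHT iterates satisfy
`limsup_{n→∞} ‖x − x^n‖ ≤ (2/√((3/2)α − 1/μ − 4C))‖e_A‖ + ‖x_A − x‖`. -/
theorem nonlinear_iht_limsup_recovery_bound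
    {N M : ℕ}
    (Φ : EuclideanSpace ℝ (Fin N) → EuclideanSpace ℝ (Fin M))
    (Φ' : EuclideanSpace ℝ (Fin N) → (EuclideanSpace ℝ (Fin N) →L[ℝ] EuclideanSpace ℝ (Fin M)))
    (hΦ : ∀ u, HasFDerivAt Φ (Φ' u) u)
    (A : Set (EuclideanSpace ℝ (Fin N))) (hA0 : (0 : EuclideanSpace ℝ (Fin N)) ∈ A)
    (PA : EuclideanSpace ℝ (Fin N) → EuclideanSpace ℝ (Fin N))
    (hPA : ∀ z, PA z ∈ A ∧ ∀ a ∈ A, ‖z - PA z‖ ≤ ‖z - a‖)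
    (y : EuclideanSpace ℝ (Fin M)) (μ α β : ℝ)
    (hμ : 0 < μ) (hα : 0 < α) (hαβ : α ≤ β) (hβμ : β ≤ 1 / μ)
    (hRIP : ∀ u ∈ A, ∀ v ∈ A, ∀ w ∈ A,
      α * ‖u - v‖ ^ 2 ≤ ‖Φ' w (u - v)‖ ^ 2 ∧ ‖Φ' w (u - v)‖ ^ 2 ≤ β * ‖u - v‖ ^ 2)
    (xseq : ℕ → EuclideanSpace ℝ (Fin N)) (hx0 : xseq 0 = 0)
    (hxit : ∀ n, xseq (n + 1) =
      PA (xseq n + μ • (ContinuousLinearMap.adjoint (Φ' (xseq n))) (y - Φ (xseq n))))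
    (xA : EuclideanSpace ℝ (Fin N)) (hxA : xA ∈ A)
    (C : ℝ) (hC : 0 ≤ C)
    (hlin : ∀ u ∈ A, ∀ v ∈ A, ‖Φ u - Φ v - (Φ' u) (u - v)‖ ^ 2 ≤ C * ‖u - v‖ ^ 2)
    (hμC : 1 / μ < (3 / 2) * α - 4 * C) :
    ∀ x : EuclideanSpace ℝ (Fin N),
      Filter.limsup (fun n => ‖x - xseq n‖) Filter.atTop ≤
        (2 / Real.sqrt ((3 / 2) * α - 1 / μ - 4 * C)) * ‖y - Φ xA‖ + ‖xA - x‖ := by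
  intro x
  have hmem : ∀ n, xseq n ∈ A := by
    intro n
    cases n with
    | zero => rw [hx0]; exact hA0
    | succ n => rw [hxit n]; exact (hPA _).1
  have hβμ' : μ * β ≤ 1 := by
    have := (le_div_iff₀ hμ).mp hβμ
    linarith
  have hαμ : α ≤ 1 / μ := le_trans hαβ hβμ
  have hμ' : (0 : ℝ) < 1 / μ := by positivity
  set E := ‖y - Φ xA‖ with hE
  have hE0 : 0 ≤ E := norm_nonneg _
  set κ := (3 : ℝ) / 2 * α - 1 / μ - 4 * C with hκdef
  have hκ : 0 < κ := by rw [hκdef]; linarith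
  have key : ∀ n, (α / 2) * ‖xA - xseq (n + 1)‖ ^ 2 ≤
      (1 / μ - α + 4 * C) * ‖xA - xseq n‖ ^ 2 + 4 * E ^ 2 := by
    intro n
    have hu := hmem n
    have hv := hmem (n + 1)
    set T := Φ' (xseq n) with hT
    have he : y - Φ (xseq n) = T (xA - xseq n) + (y - Φ (xseq n) - T (xA - xseq n)) := by
      abel
    have heE : ‖y - Φ (xseq n) - T (xA - xseq n)‖ ^ 2 ≤
        2 * E ^ 2 + 2 * C * ‖xA - xseq n‖ ^ 2 := by
      have hee : y - Φ (xseq n) - T (xA - xseq n) =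
          (y - Φ xA) - (Φ (xseq n) - Φ xA - T (xseq n - xA)) := by
        rw [map_sub, map_sub]
        abel
      have h1 := hlin (xseq n) hu xA hxA
      rw [norm_sub_rev (xseq n) xA] at h1
      have h2 : ‖y - Φ (xseq n) - T (xA - xseq n)‖ ≤
          E + ‖Φ (xseq n) - Φ xA - T (xseq n - xA)‖ := by
        rw [hee, hE]
        exact norm_sub_le _ _
      have h3 := pow_le_pow_left₀ (norm_nonneg _) h2 2
      nlinarith [sq_nonneg (E - ‖Φ (xseq n) - Φ xA - T (xseq n - xA)‖)]
    have hproj : ‖(xseq n + μ • (ContinuousLinearMap.adjoint T) (y - Φ (xseq n))) - xseq (n + 1)‖ ≤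
        ‖(xseq n + μ • (ContinuousLinearMap.adjoint T) (y - Φ (xseq n))) - xA‖ := by
      rw [hxit n]
      exact (hPA _).2 xA hxA
    exact iht_step T (xseq n) (xseq (n + 1)) xA (y - Φ (xseq n))
      (y - Φ (xseq n) - T (xA - xseq n)) μ α β C E hμ hβμ' he heE hproj
      (hRIP xA hxA (xseq n) hu (xseq n) hu).1
      (hRIP xA hxA (xseq (n + 1)) hv (xseq n) hu).1
      (hRIP (xseq n) hu (xseq (n + 1)) hv (xseq n) hu).2
  set K := 4 * E ^ 2 / κ with hKdef
  have hK0 : 0 ≤ K := by positivity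
  have hα2 : (0 : ℝ) < α / 2 := by linarith
  set ρ := (1 / μ - α + 4 * C) / (α / 2) with hρdef
  have hρ1 : ρ < 1 := (div_lt_one hα2).mpr (by rw [hκdef] at hκ; linarith)
  set q := max ρ 0 with hqdef
  have hq0 : 0 ≤ q := le_max_right _ _
  have hq1 : q < 1 := max_lt hρ1 one_pos
  have hstep : ∀ n, ‖xA - xseq (n + 1)‖ ^ 2 ≤ q * ‖xA - xseq n‖ ^ 2 + (1 - q) * K := by
    intro n
    have hk := key n
    obtain ⟨Dv, hDv⟩ : ∃ t, ‖xA - xseq (n + 1)‖ ^ 2 = t := ⟨_, rfl⟩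
    obtain ⟨Du, hDu⟩ : ∃ t, ‖xA - xseq n‖ ^ 2 = t := ⟨_, rfl⟩
    have hDv0 : (0 : ℝ) ≤ Dv := hDv ▸ sq_nonneg _
    have hDu0 : (0 : ℝ) ≤ Du := hDu ▸ sq_nonneg _
    rw [hDv, hDu] at hk ⊢
    have hk2 : Dv ≤ ρ * Du + 4 * E ^ 2 / (α / 2) := by
      calc Dv = (α / 2) * Dv / (α / 2) := by field_simp
        _ ≤ ((1 / μ - α + 4 * C) * Du + 4 * E ^ 2) / (α / 2) := by
            apply div_le_div_of_nonneg_right ?_ hα2.le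
            linarith [hk]
        _ = ρ * Du + 4 * E ^ 2 / (α / 2) := by rw [hρdef]; ring
    rcases le_or_gt 0 ρ with hρ0 | hρ0
    · have hqq : q = ρ := max_eq_left hρ0
      rw [hqq]
      have h1ρ : 1 - ρ = κ / (α / 2) := by
        rw [hρdef, hκdef]
        field_simp
        ring
      have e3 : (1 - ρ) * K = 4 * E ^ 2 / (α / 2) := by
        rw [h1ρ, hKdef, div_mul_div_comm, mul_comm κ (4 * E ^ 2)]
        rw [mul_comm (α / 2) κ, ← div_div, mul_div_assoc, div_self hκ.ne', mul_one]
      linarith [hk2]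
    · have hqq : q = 0 := max_eq_right hρ0.le
      rw [hqq]
      have h4 : ρ * Du ≤ 0 :=
        mul_nonpos_of_nonpos_of_nonneg hρ0.le hDu0
      have h5 : 4 * E ^ 2 / (α / 2) ≤ K := by
        rw [hKdef]
        rw [div_le_div_iff₀ hα2 hκ]
        have : κ ≤ α / 2 := by rw [hκdef]; linarith
        nlinarith [sq_nonneg E]
      simp only [zero_mul, zero_add, one_mul, sub_zero]
      linarith [hk2]
  set P := max (‖xA - xseq 0‖ ^ 2) K with hP
  have hP0 : 0 ≤ P := le_trans hK0 (le_max_right _ _)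
  have hbound : ∀ n, ‖xA - xseq n‖ ^ 2 ≤ K + q ^ n * P := by
    intro n
    induction n with
    | zero =>
      have : ‖xA - xseq 0‖ ^ 2 ≤ P := le_max_left _ _
      simpa using by linarith
    | succ n ih =>
      have h2 : q * ‖xA - xseq n‖ ^ 2 ≤ q * (K + q ^ n * P) :=
        mul_le_mul_of_nonneg_left ih hq0
      have h4 : q * (K + q ^ n * P) + (1 - q) * K = K + q ^ (n + 1) * P := by ring
      linarith [hstep n, h2]
  have hfg : ∀ n, ‖x - xseq n‖ ≤ ‖xA - x‖ + Real.sqrt (K + q ^ n * P) := by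
    intro n
    have t1 : ‖x - xseq n‖ ≤ ‖x - xA‖ + ‖xA - xseq n‖ := by
      calc ‖x - xseq n‖ = ‖(x - xA) + (xA - xseq n)‖ := by rw [sub_add_sub_cancel]
        _ ≤ ‖x - xA‖ + ‖xA - xseq n‖ := norm_add_le _ _
    have t2 : ‖xA - xseq n‖ ≤ Real.sqrt (K + q ^ n * P) := by
      have h := Real.sqrt_le_sqrt (hbound n)
      rwa [Real.sqrt_sq (norm_nonneg _)] at h
    rw [norm_sub_rev x xA] at t1
    linarith
  have htq : Filter.Tendsto (fun n : ℕ => q ^ n) Filter.atTop (nhds 0) :=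
    tendsto_pow_atTop_nhds_zero_of_lt_one hq0 hq1
  have hgt : Filter.Tendsto (fun n : ℕ => ‖xA - x‖ + Real.sqrt (K + q ^ n * P))
      Filter.atTop (nhds (‖xA - x‖ + Real.sqrt K)) := by
    have h1 : Filter.Tendsto (fun n : ℕ => K + q ^ n * P) Filter.atTop (nhds (K + 0 * P)) :=
      tendsto_const_nhds.add (htq.mul_const P)
    rw [zero_mul, add_zero] at h1
    have h2 : Filter.Tendsto (fun n : ℕ => Real.sqrt (K + q ^ n * P)) Filter.atTop
        (nhds (Real.sqrt K)) := (Real.continuous_sqrt.tendsto K).comp h1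
    exact tendsto_const_nhds.add h2
  have hls : Filter.limsup (fun n => ‖x - xseq n‖) Filter.atTop ≤ ‖xA - x‖ + Real.sqrt K := by
    have hco : Filter.IsCoboundedUnder (· ≤ ·) Filter.atTop (fun n => ‖x - xseq n‖) :=
      Filter.isCoboundedUnder_le_of_le Filter.atTop (fun n => norm_nonneg _)
    have hbd : Filter.IsBoundedUnder (· ≤ ·) Filter.atTop
        (fun n : ℕ => ‖xA - x‖ + Real.sqrt (K + q ^ n * P)) := hgt.isBoundedUnder_le
    calc Filter.limsup (fun n => ‖x - xseq n‖) Filter.atTop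
        ≤ Filter.limsup (fun n : ℕ => ‖xA - x‖ + Real.sqrt (K + q ^ n * P)) Filter.atTop :=
          Filter.limsup_le_limsup (Filter.Eventually.of_forall hfg) hco hbd
      _ = ‖xA - x‖ + Real.sqrt K := hgt.limsup_eq
  have hsqrtK : Real.sqrt K = 2 / Real.sqrt κ * E := by
    rw [hKdef, show 4 * E ^ 2 / κ = (2 / Real.sqrt κ * E) ^ 2 by
      rw [mul_pow, div_pow, Real.sq_sqrt hκ.le]; ring]
    exact Real.sqrt_sq (mul_nonneg (by positivity) hE0)
  rw [hsqrtK] at hls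
  linarith [hls]
end

section
/- Suppose Φ̄ satisfies √α·‖z‖ ≤ ‖Φ̄ z‖ ≤ √β·‖z‖ for every z ∈ ℝ^N whose support has at most 2k elements, where 0 < α ≤ β, and suppose M·√β ≤ √α. Fix x* ∈ ℝ^N and let D_{x*} : ℝ^N → ℝ^N be the diagonal linear map (D_{x*} z)_i = h'(x*_i)·z_i. Then for all k-sparse vectors x₁, x₂ (each with support of at most k elements), (√α − M·√β)·‖x₁ − x₂‖ ≤ ‖Φ̄((I + D_{x*})(x₁ − x₂))‖ ≤ (1 + M)·√β·‖x₁ − x₂‖. -/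
/-- If `Φ̄` satisfies `√α‖z‖ ≤ ‖Φ̄z‖ ≤ √β‖z‖` on `2k`-sparse vectors, with
`0 < α ≤ β` and `M√β ≤ √α`, and `D_{x*}` is the diagonal map with entries `h'(x*_i)`, then
for all `k`-sparse `x₁, x₂`:
`(√α − M√β)‖x₁ − x₂‖ ≤ ‖Φ̄((I + D_{x*})(x₁ − x₂))‖ ≤ (1 + M)√β‖x₁ − x₂‖`. -/
theorem perturbed_matrix_restricted_isometry
    {N M k : ℕ}
    (Φbar : EuclideanSpace ℝ (Fin N) →ₗ[ℝ] EuclideanSpace ℝ (Fin M))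
    (α β Mc : ℝ) (hα : 0 < α) (hαβ : α ≤ β) (hMc : 0 ≤ Mc)
    (h : ℝ → ℝ) (hdiff : ∀ t : ℝ, DifferentiableAt ℝ h t)
    (hbd : ∀ t : ℝ, |deriv h t| ≤ Mc)
    (hRIP : ∀ z : EuclideanSpace ℝ (Fin N), {i | z i ≠ 0}.ncard ≤ 2 * k →
      Real.sqrt α * ‖z‖ ≤ ‖Φbar z‖ ∧ ‖Φbar z‖ ≤ Real.sqrt β * ‖z‖)
    (hMβα : Mc * Real.sqrt β ≤ Real.sqrt α)
    (xstar : EuclideanSpace ℝ (Fin N))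
    (D : EuclideanSpace ℝ (Fin N) →ₗ[ℝ] EuclideanSpace ℝ (Fin N))
    (hD : ∀ (z : EuclideanSpace ℝ (Fin N)) (i : Fin N), D z i = deriv h (xstar i) * z i) :
    ∀ x₁ x₂ : EuclideanSpace ℝ (Fin N),
      {i | x₁ i ≠ 0}.ncard ≤ k → {i | x₂ i ≠ 0}.ncard ≤ k →
      (Real.sqrt α - Mc * Real.sqrt β) * ‖x₁ - x₂‖ ≤ ‖Φbar ((x₁ - x₂) + D (x₁ - x₂))‖ ∧
        ‖Φbar ((x₁ - x₂) + D (x₁ - x₂))‖ ≤ (1 + Mc) * Real.sqrt β * ‖x₁ - x₂‖ := by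
  intro x₁ x₂ h₁ h₂
  set z := x₁ - x₂ with hz
  have hβpos : 0 ≤ Real.sqrt β := Real.sqrt_nonneg β
  -- support of z is ≤ 2k
  have hzsupp : {i | z i ≠ 0}.ncard ≤ 2 * k := by
    have hsub : {i | z i ≠ 0} ⊆ {i | x₁ i ≠ 0} ∪ {i | x₂ i ≠ 0} := by
      intro i hi
      by_contra hcon
      simp only [Set.mem_union, Set.mem_setOf_eq, not_or, not_not] at hcon
      apply hi
      simp [hz, hcon.1, hcon.2]
    calc {i | z i ≠ 0}.ncard ≤ ({i | x₁ i ≠ 0} ∪ {i | x₂ i ≠ 0}).ncard :=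
          Set.ncard_le_ncard hsub (Set.toFinite _)
      _ ≤ {i | x₁ i ≠ 0}.ncard + {i | x₂ i ≠ 0}.ncard := Set.ncard_union_le _ _
      _ ≤ 2 * k := by omega
  -- support of D z ⊆ support of z
  have hDzsupp : {i | (D z) i ≠ 0}.ncard ≤ 2 * k := by
    refine le_trans (Set.ncard_le_ncard ?_ (Set.toFinite _)) hzsupp
    intro i hi
    simp only [Set.mem_setOf_eq] at hi ⊢
    intro hzi
    apply hi
    rw [hD, hzi, mul_zero]
  have hsumsupp : {i | (z + D z) i ≠ 0}.ncard ≤ 2 * k := by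
    refine le_trans (Set.ncard_le_ncard ?_ (Set.toFinite _)) hzsupp
    intro i hi
    simp only [Set.mem_setOf_eq] at hi ⊢
    intro hzi
    apply hi
    have : (z + D z) i = z i + D z i := rfl
    rw [this, hD, hzi, mul_zero, add_zero]
  -- norm bound for D z
  have hDnorm : ‖D z‖ ≤ Mc * ‖z‖ := by
    have h1 : ‖D z‖ = Real.sqrt (∑ i, ‖D z i‖ ^ 2) := EuclideanSpace.norm_eq _
    have h2 : ‖z‖ = Real.sqrt (∑ i, ‖z i‖ ^ 2) := EuclideanSpace.norm_eq _
    rw [h1, h2]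
    rw [show Mc * Real.sqrt (∑ i, ‖z i‖ ^ 2)
        = Real.sqrt (Mc ^ 2 * ∑ i, ‖z i‖ ^ 2) by
      rw [Real.sqrt_mul (by positivity), Real.sqrt_sq hMc]]
    apply Real.sqrt_le_sqrt
    rw [Finset.mul_sum]
    apply Finset.sum_le_sum
    intro i _
    rw [hD, norm_mul, mul_pow, Real.norm_eq_abs]
    exact mul_le_mul_of_nonneg_right
      (pow_le_pow_left₀ (abs_nonneg _) (hbd _) 2) (by positivity)
  have hRz := hRIP z hzsupp
  have hRDz := hRIP (D z) hDzsupp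
  have hRs := hRIP (z + D z) hsumsupp
  have hΦDz : ‖Φbar (D z)‖ ≤ Mc * Real.sqrt β * ‖z‖ := by
    calc ‖Φbar (D z)‖ ≤ Real.sqrt β * ‖D z‖ := hRDz.2
      _ ≤ Real.sqrt β * (Mc * ‖z‖) := by gcongr
      _ = Mc * Real.sqrt β * ‖z‖ := by ring
  constructor
  · -- lower bound
    have key : ‖Φbar z‖ ≤ ‖Φbar (z + D z)‖ + ‖Φbar (D z)‖ := by
      have : Φbar z = Φbar (z + D z) - Φbar (D z) := by
        rw [map_add]; abel
      rw [this]
      exact norm_sub_le _ _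
    have : Real.sqrt α * ‖z‖ - Mc * Real.sqrt β * ‖z‖ ≤ ‖Φbar (z + D z)‖ := by
      have := hRz.1
      linarith
    calc (Real.sqrt α - Mc * Real.sqrt β) * ‖z‖
        = Real.sqrt α * ‖z‖ - Mc * Real.sqrt β * ‖z‖ := by ring
      _ ≤ ‖Φbar (z + D z)‖ := this
  · -- upper bound
    calc ‖Φbar (z + D z)‖ ≤ Real.sqrt β * ‖z + D z‖ := hRs.2
      _ ≤ Real.sqrt β * (‖z‖ + ‖D z‖) := by gcongr; exact norm_add_le _ _
      _ ≤ Real.sqrt β * (‖z‖ + Mc * ‖z‖) := by gcongr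
      _ = (1 + Mc) * Real.sqrt β * ‖z‖ := by ring
end

section
/- Suppose ‖Φ̄ z‖² ≤ β·‖z‖² for all z ∈ ℝ^N, where β ≥ 0. Define Φ : ℝ^N → ℝ^M by Φ(x) = Φ̄(x + h⊙x), where (h⊙x)_i = h(x_i), and for u ∈ ℝ^N define the linear map L_u : ℝ^N → ℝ^M by L_u z = Φ̄(z + D_u z) with (D_u z)_i = h'(u_i)·z_i. Then for all x₁, x₂ ∈ ℝ^N, ‖Φ(x₁) − Φ(x₂) − L_{x₁}(x₁ − x₂)‖ ≤ 2·M·√β·‖x₁ − x₂‖. -/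
/-- If `‖Φ̄z‖² ≤ β‖z‖²` for all `z`, `Φ(x) = Φ̄(x + h⊙x)` and
`L_u z = Φ̄(z + D_u z)` with `(D_u z)_i = h'(u_i)z_i`, then for all `x₁, x₂`:
`‖Φ(x₁) − Φ(x₂) − L_{x₁}(x₁ − x₂)‖ ≤ 2M√β‖x₁ − x₂‖`. -/
theorem nonlinear_sensing_linearization_error_bound
    {N M : ℕ}
    (Φbar : EuclideanSpace ℝ (Fin N) →ₗ[ℝ] EuclideanSpace ℝ (Fin M))
    (β Mc : ℝ) (hβ : 0 ≤ β) (hMc : 0 ≤ Mc)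
    (hop : ∀ z : EuclideanSpace ℝ (Fin N), ‖Φbar z‖ ^ 2 ≤ β * ‖z‖ ^ 2)
    (h : ℝ → ℝ) (hdiff : ∀ t : ℝ, DifferentiableAt ℝ h t)
    (hbd : ∀ t : ℝ, |deriv h t| ≤ Mc)
    (happ : EuclideanSpace ℝ (Fin N) → EuclideanSpace ℝ (Fin N))
    (hhapp : ∀ (x : EuclideanSpace ℝ (Fin N)) (i : Fin N), happ x i = h (x i))
    (D : EuclideanSpace ℝ (Fin N) → EuclideanSpace ℝ (Fin N) →ₗ[ℝ] EuclideanSpace ℝ (Fin N))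
    (hD : ∀ (u z : EuclideanSpace ℝ (Fin N)) (i : Fin N), D u z i = deriv h (u i) * z i)
    (Φ : EuclideanSpace ℝ (Fin N) → EuclideanSpace ℝ (Fin M))
    (hΦ : ∀ x : EuclideanSpace ℝ (Fin N), Φ x = Φbar (x + happ x)) :
    ∀ x₁ x₂ : EuclideanSpace ℝ (Fin N),
      ‖Φ x₁ - Φ x₂ - Φbar ((x₁ - x₂) + D x₁ (x₁ - x₂))‖ ≤
        2 * Mc * Real.sqrt β * ‖x₁ - x₂‖ := by
  intro x₁ x₂
  -- Lipschitz bound for h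
  have hlip : ∀ a b : ℝ, |h a - h b| ≤ Mc * |a - b| := by
    intro a b
    have := Convex.norm_image_sub_le_of_norm_deriv_le
      (s := (Set.univ : Set ℝ)) (f := h) (C := Mc)
      (fun x _ => hdiff x)
      (fun x _ => by simpa [Real.norm_eq_abs] using hbd x)
      convex_univ (Set.mem_univ b) (Set.mem_univ a)
    simpa [Real.norm_eq_abs] using this
  set d := x₁ - x₂ with hd
  set w : EuclideanSpace ℝ (Fin N) := happ x₁ - happ x₂ - D x₁ d with hw
  have key : Φ x₁ - Φ x₂ - Φbar (d + D x₁ d) = Φbar w := by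
    rw [hΦ, hΦ, hw, hd]
    simp only [← map_sub]
    congr 1
    abel
  rw [key]
  -- coordinatewise bound on w
  have hwcoord : ∀ i : Fin N, |w i| ≤ 2 * Mc * |d i| := by
    intro i
    have hwi : w i = h (x₁ i) - h (x₂ i) - deriv h (x₁ i) * d i := by
      simp [hw, hhapp, hD]
    rw [hwi]
    have h1 := hlip (x₁ i) (x₂ i)
    have h2 : |deriv h (x₁ i) * d i| ≤ Mc * |d i| := by
      rw [abs_mul]
      exact mul_le_mul_of_nonneg_right (hbd _) (abs_nonneg _)
    have hdi : (x₁ : Fin N → ℝ) i - x₂ i = d i := by simp [hd]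
    calc |h (x₁ i) - h (x₂ i) - deriv h (x₁ i) * d i|
        ≤ |h (x₁ i) - h (x₂ i)| + |deriv h (x₁ i) * d i| := abs_sub _ _
      _ ≤ Mc * |d i| + Mc * |d i| := by
          refine add_le_add ?_ h2
          rw [← hdi] at *
          exact h1
      _ = 2 * Mc * |d i| := by ring
  have hwnorm : ‖w‖ ≤ 2 * Mc * ‖d‖ := by
    rw [EuclideanSpace.norm_eq, EuclideanSpace.norm_eq]
    rw [← Real.sqrt_sq (by positivity : (0:ℝ) ≤ 2 * Mc), ← Real.sqrt_mul (by positivity)]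
    apply Real.sqrt_le_sqrt
    rw [Finset.mul_sum]
    apply Finset.sum_le_sum
    intro i _
    have := hwcoord i
    have : ‖w i‖ ^ 2 ≤ (2 * Mc * |d i|) ^ 2 := by
      rw [Real.norm_eq_abs]
      exact pow_le_pow_left₀ (abs_nonneg _) this 2
    calc ‖w i‖ ^ 2 ≤ (2 * Mc * |d i|) ^ 2 := this
      _ = (2 * Mc) ^ 2 * ‖d i‖ ^ 2 := by rw [Real.norm_eq_abs]; ring
  have hΦw : ‖Φbar w‖ ≤ Real.sqrt β * ‖w‖ := by
    have := hop w
    have h0 : ‖Φbar w‖ = Real.sqrt (‖Φbar w‖ ^ 2) := by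
      rw [Real.sqrt_sq (norm_nonneg _)]
    rw [h0]
    calc Real.sqrt (‖Φbar w‖ ^ 2) ≤ Real.sqrt (β * ‖w‖ ^ 2) := Real.sqrt_le_sqrt this
      _ = Real.sqrt β * ‖w‖ := by
          rw [Real.sqrt_mul hβ, Real.sqrt_sq (norm_nonneg _)]
  calc ‖Φbar w‖ ≤ Real.sqrt β * ‖w‖ := hΦw
    _ ≤ Real.sqrt β * (2 * Mc * ‖d‖) :=
        mul_le_mul_of_nonneg_left hwnorm (Real.sqrt_nonneg _)
    _ = 2 * Mc * Real.sqrt β * ‖d‖ := by ring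
end

section
/- Assume f(z) ≥ 0 for all z, the Restricted Strict Convexity Property with constants 0 < α ≤ β on A + A + A, μ > 0, and β ≤ 1/μ. Let x_opt ∈ A satisfy f(x_opt) ≤ f(z) for all z ∈ A. Then the projected-gradient (IHT) iterates x^{n+1} = P_A(x^n − (μ/2)·∇f(x^n)) satisfy, for every n ≥ 0, ‖x^{n+1} − x_opt‖² ≤ 4·(1 − μα)·‖x^n − x_opt‖² + 4·μ·f(x_opt). -/
open scoped InnerProductSpace Pointwise

set_option maxHeartbeats 1000000 in
/-- If `f ≥ 0` satisfies the Restricted Strict Convexity Property with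
`0 < α ≤ β` on `A + A + A` (with `A` a union of subspaces), `μ > 0`, `β ≤ 1/μ`, and `x_opt`
minimises `f` over `A`, then the projected-gradient (IHT) iterates satisfy, for every `n`,
`‖x^{n+1} − x_opt‖² ≤ 4(1 − μα)‖x^n − x_opt‖² + 4μf(x_opt)`. -/
theorem iht_nonlinear_objective_per_iteration_bound
    {N : ℕ} {ι : Type*} [Nonempty ι]
    (Asub : ι → Submodule ℝ (EuclideanSpace ℝ (Fin N)))
    (A : Set (EuclideanSpace ℝ (Fin N))) (hA : A = ⋃ i, (Asub i : Set (EuclideanSpace ℝ (Fin N))))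
    (f : EuclideanSpace ℝ (Fin N) → ℝ) (hf : ∀ z, 0 ≤ f z)
    (gradf : EuclideanSpace ℝ (Fin N) → EuclideanSpace ℝ (Fin N))
    (hgrad : ∀ u, HasGradientAt f (gradf u) u)
    (α β μ : ℝ) (hα : 0 < α) (hαβ : α ≤ β) (hμ : 0 < μ) (hβμ : β ≤ 1 / μ)
    (hRSCP : ∀ x₁ x₂ : EuclideanSpace ℝ (Fin N), x₁ - x₂ ∈ A + A + A →
      α * ‖x₁ - x₂‖ ^ 2 ≤ f x₁ - f x₂ - ⟪gradf x₂, x₁ - x₂⟫_ℝ ∧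
        f x₁ - f x₂ - ⟪gradf x₂, x₁ - x₂⟫_ℝ ≤ β * ‖x₁ - x₂‖ ^ 2)
    (PA : EuclideanSpace ℝ (Fin N) → EuclideanSpace ℝ (Fin N))
    (hPA : ∀ z, PA z ∈ A ∧ ∀ a ∈ A, ‖z - PA z‖ ≤ ‖z - a‖)
    (xopt : EuclideanSpace ℝ (Fin N)) (hxoptA : xopt ∈ A) (hxopt : ∀ z ∈ A, f xopt ≤ f z)
    (x : ℕ → EuclideanSpace ℝ (Fin N)) (hx0 : x 0 = 0)
    (hxit : ∀ n, x (n + 1) = PA (x n - (μ / 2) • gradf (x n))) :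
    ∀ n : ℕ, ‖x (n + 1) - xopt‖ ^ 2 ≤
      4 * (1 - μ * α) * ‖x n - xopt‖ ^ 2 + 4 * μ * f xopt := by
  have hμβ' : μ * β ≤ 1 := by
    rw [le_div_iff₀ hμ] at hβμ; linarith
  have hsubA : ∀ i, (Asub i : Set (EuclideanSpace ℝ (Fin N))) ⊆ A := by
    intro i; rw [hA]; exact Set.subset_iUnion (fun i => (Asub i : Set (EuclideanSpace ℝ (Fin N)))) i
  have hmemA : ∀ z : EuclideanSpace ℝ (Fin N), z ∈ A → ∃ i, z ∈ Asub i := by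
    intro z hz; rw [hA] at hz; simpa using hz
  have hxA : ∀ n, x n ∈ A := by
    intro n
    cases n with
    | zero => rw [hx0]; exact hsubA (Classical.arbitrary ι) (Submodule.zero_mem _)
    | succ m => rw [hxit m]; exact (hPA _).1
  intro n
  obtain ⟨i1, hi1⟩ := hmemA _ (hxA n)
  obtain ⟨i2, hi2⟩ := hmemA _ hxoptA
  obtain ⟨i3, hi3⟩ := hmemA _ (hxA (n + 1))
  set T : Submodule ℝ (EuclideanSpace ℝ (Fin N)) := Asub i1 ⊔ Asub i2 ⊔ Asub i3 with hTdef
  have hTA : ∀ w ∈ T, w ∈ A + A + A := by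
    intro w hw
    obtain ⟨a, ha, c, hc, rfl⟩ := Submodule.mem_sup.1 hw
    obtain ⟨pp, hpp, q, hq, rfl⟩ := Submodule.mem_sup.1 ha
    exact Set.add_mem_add (Set.add_mem_add (hsubA _ hpp) (hsubA _ hq)) (hsubA _ hc)
  have hxnT : x n ∈ T := Submodule.mem_sup_left (Submodule.mem_sup_left hi1)
  have hoptT : xopt ∈ T := Submodule.mem_sup_left (Submodule.mem_sup_right hi2)
  have huT : x (n + 1) ∈ T := Submodule.mem_sup_right hi3
  set g : EuclideanSpace ℝ (Fin N) := gradf (x n) with hgdef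
  set y : EuclideanSpace ℝ (Fin N) := x n - (μ / 2) • g with hydef
  set u : EuclideanSpace ℝ (Fin N) := x (n + 1) with hudef
  set Pg : EuclideanSpace ℝ (Fin N) := (T.orthogonalProjectionOnto g : EuclideanSpace ℝ (Fin N)) with hPgdef
  set p : EuclideanSpace ℝ (Fin N) := (T.orthogonalProjectionOnto y : EuclideanSpace ℝ (Fin N)) with hpdef
  have hPgT : Pg ∈ T := Submodule.coe_mem _
  have hpT : p ∈ T := Submodule.coe_mem _
  -- orthogonality facts
  have horth : ∀ v w : EuclideanSpace ℝ (Fin N), w ∈ T →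
      ⟪v - (T.orthogonalProjectionOnto v : EuclideanSpace ℝ (Fin N)), w⟫_ℝ = 0 :=
    fun v w hw => Submodule.starProjection_inner_eq_zero v w hw
  have hinner : ∀ w : EuclideanSpace ℝ (Fin N), w ∈ T → ⟪g, w⟫_ℝ = ⟪Pg, w⟫_ℝ := by
    intro w hw
    have := horth g w hw
    rw [inner_sub_left] at this
    linarith
  -- p = x n - (μ/2) • Pg
  have hpeq : p = x n - (μ / 2) • Pg := by
    have h1 : (T.orthogonalProjectionOnto (x n) : EuclideanSpace ℝ (Fin N)) = x n :=
      Submodule.starProjection_eq_self_iff.2 hxnT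
    rw [hpdef, hydef, map_sub, map_smul]
    push_cast
    rw [h1]
  -- Pythagoras
  have hpyth : ∀ a : EuclideanSpace ℝ (Fin N), a ∈ T →
      ‖y - a‖ ^ 2 = ‖y - p‖ ^ 2 + ‖p - a‖ ^ 2 := by
    intro a ha
    have h0 : ⟪y - p, p - a⟫_ℝ = 0 := horth y _ (T.sub_mem hpT ha)
    have hsplit : y - a = (y - p) + (p - a) := by abel
    rw [hsplit, norm_add_sq_real, h0]; ring
  -- projection inequality
  have hproj : ‖y - u‖ ≤ ‖y - xopt‖ := by
    rw [hudef, hxit n]; exact (hPA y).2 xopt hxoptA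
  have hprojsq : ‖p - u‖ ^ 2 ≤ ‖p - xopt‖ ^ 2 := by
    have h1 := hpyth u huT
    have h2 := hpyth xopt hoptT
    have h3 : ‖y - u‖ ^ 2 ≤ ‖y - xopt‖ ^ 2 :=
      pow_le_pow_left₀ (norm_nonneg _) hproj 2
    linarith
  have hprojle : ‖p - u‖ ≤ ‖p - xopt‖ := le_of_sq_le_sq hprojsq (norm_nonneg _)
  -- triangle: r ≤ 2 q
  have htri : ‖u - xopt‖ ≤ 2 * ‖p - xopt‖ := by
    have h1 : ‖u - xopt‖ ≤ ‖u - p‖ + ‖p - xopt‖ := norm_sub_le_norm_sub_add_norm_sub u p xopt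
    have h2 : ‖u - p‖ = ‖p - u‖ := norm_sub_rev _ _
    linarith
  -- key scalars
  set D : ℝ := ‖x n - xopt‖ ^ 2 with hDdef
  set G : ℝ := ‖Pg‖ ^ 2 with hGdef
  set c : ℝ := ⟪g, x n - xopt⟫_ℝ with hcdef
  have hG0 : 0 ≤ G := sq_nonneg _
  have hD0 : 0 ≤ D := sq_nonneg _
  -- q^2 expansion
  have hq2 : ‖p - xopt‖ ^ 2 = D - μ * c + (μ ^ 2 / 4) * G := by
    have hsplit : p - xopt = (x n - xopt) - (μ / 2) • Pg := by rw [hpeq]; abel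
    have hc' : ⟪x n - xopt, (μ / 2) • Pg⟫_ℝ = (μ / 2) * c := by
      rw [real_inner_smul_right, hcdef, real_inner_comm,
        hinner _ (T.sub_mem hxnT hoptT)]
    rw [hsplit, norm_sub_sq_real, hc', norm_smul, Real.norm_eq_abs,
      abs_of_nonneg (by linarith : (0:ℝ) ≤ μ / 2)]
    rw [mul_pow]
    ring
  -- RSCP lower bound at (xopt, x n)
  have hlow : α * D ≤ f xopt - f (x n) + c := by
    have hmem : xopt - x n ∈ A + A + A := hTA _ (T.sub_mem hoptT hxnT)
    have h := (hRSCP xopt (x n) hmem).1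
    have h1 : ‖xopt - x n‖ = ‖x n - xopt‖ := norm_sub_rev _ _
    have h2 : ⟪gradf (x n), xopt - x n⟫_ℝ = -c := by
      rw [hcdef, hgdef, ← inner_neg_right, neg_sub]
    rw [h1, h2, ← hDdef] at h
    linarith
  -- gradient bound: (μ/4) * G ≤ f (x n)
  have hgradbd : (μ / 4) * G ≤ f (x n) := by
    set z : EuclideanSpace ℝ (Fin N) := x n - (μ / 2) • Pg with hzdef
    have hdiff : z - x n = -((μ / 2) • Pg) := by rw [hzdef]; abel
    have hmem : z - x n ∈ A + A + A := by
      rw [hdiff]; exact hTA _ (T.neg_mem (T.smul_mem _ hPgT))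
    have h := (hRSCP z (x n) hmem).2
    have hgPg : ⟪g, Pg⟫_ℝ = G := by
      rw [hinner _ hPgT, hGdef, real_inner_self_eq_norm_sq]
    have h2 : ⟪gradf (x n), z - x n⟫_ℝ = -((μ / 2) * G) := by
      rw [hdiff, inner_neg_right, real_inner_smul_right, ← hgdef, hgPg]
    have h3 : ‖z - x n‖ ^ 2 = (μ / 2) ^ 2 * G := by
      rw [hdiff, norm_neg, norm_smul, Real.norm_eq_abs,
        abs_of_nonneg (by linarith : (0:ℝ) ≤ μ / 2), mul_pow, hGdef]
    rw [h2, h3] at h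
    have hz0 : 0 ≤ f z := hf z
    nlinarith [mul_nonneg (mul_nonneg hμ.le hG0) (sub_nonneg.2 hμβ'), sq_nonneg μ]
  -- put it together
  have hr2 : ‖u - xopt‖ ^ 2 ≤ 4 * ‖p - xopt‖ ^ 2 := by
    nlinarith [norm_nonneg (u - xopt), norm_nonneg (p - xopt)]
  have hfinal : ‖p - xopt‖ ^ 2 ≤ (1 - μ * α) * D + μ * f xopt := by
    have hfn : 0 ≤ f (x n) := hf _
    nlinarith [mul_le_mul_of_nonneg_left hgradbd hμ.le, mul_le_mul_of_nonneg_left hlow hμ.le]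
  calc ‖x (n + 1) - xopt‖ ^ 2 = ‖u - xopt‖ ^ 2 := by rw [hudef]
    _ ≤ 4 * ‖p - xopt‖ ^ 2 := hr2
    _ ≤ 4 * ((1 - μ * α) * D + μ * f xopt) := by linarith
    _ = 4 * (1 - μ * α) * ‖x n - xopt‖ ^ 2 + 4 * μ * f xopt := by rw [hDdef]; ring
end

section
/- Assume f(z) ≥ 0 for all z, the Restricted Strict Convexity Property with constants 0 < α ≤ β on A + A + A, and β ≤ 1/μ < (4/3)·α. Let x_opt ∈ A satisfy f(x_opt) ≤ f(z) for all z ∈ A, and set c := 4·(1 − μα), so 0 ≤ c < 1. Then the projected-gradient (IHT) iterates with x⁰ = 0 satisfy, for every n ≥ 0 and every x ∈ H, ‖x^n − x‖ ≤ c^{n/2}·‖x_opt‖ + 2·√(μ·f(x_opt)/(1 − c)) + ‖x − x_opt‖. -/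
open scoped InnerProductSpace Pointwise

set_option maxHeartbeats 1000000

/-- If `f ≥ 0` satisfies the Restricted Strict Convexity Property with
`0 < α ≤ β` on `A + A + A` (with `A` a union of subspaces), `β ≤ 1/μ < (4/3)α`, and `x_opt`
minimises `f` over `A`, then with `c := 4(1 − μα)` the projected-gradient iterates with
`x⁰ = 0` satisfy, for every `n` and every `x`,
`‖x^n − x‖ ≤ c^{n/2}‖x_opt‖ + 2√(μf(x_opt)/(1 − c)) + ‖x − x_opt‖`. -/
theorem iht_nonlinear_objective_recovery_bound
    {N : ℕ} {ι : Type*} [Nonempty ι]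
    (Asub : ι → Submodule ℝ (EuclideanSpace ℝ (Fin N)))
    (A : Set (EuclideanSpace ℝ (Fin N))) (hA : A = ⋃ i, (Asub i : Set (EuclideanSpace ℝ (Fin N))))
    (f : EuclideanSpace ℝ (Fin N) → ℝ) (hf : ∀ z, 0 ≤ f z)
    (gradf : EuclideanSpace ℝ (Fin N) → EuclideanSpace ℝ (Fin N))
    (hgrad : ∀ u, HasGradientAt f (gradf u) u)
    (α β μ : ℝ) (hα : 0 < α) (hαβ : α ≤ β) (hμ : 0 < μ)
    (hβμ : β ≤ 1 / μ) (hμα : 1 / μ < (4 / 3) * α)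
    (hRSCP : ∀ x₁ x₂ : EuclideanSpace ℝ (Fin N), x₁ - x₂ ∈ A + A + A →
      α * ‖x₁ - x₂‖ ^ 2 ≤ f x₁ - f x₂ - ⟪gradf x₂, x₁ - x₂⟫_ℝ ∧
        f x₁ - f x₂ - ⟪gradf x₂, x₁ - x₂⟫_ℝ ≤ β * ‖x₁ - x₂‖ ^ 2)
    (PA : EuclideanSpace ℝ (Fin N) → EuclideanSpace ℝ (Fin N))
    (hPA : ∀ z, PA z ∈ A ∧ ∀ a ∈ A, ‖z - PA z‖ ≤ ‖z - a‖)
    (xopt : EuclideanSpace ℝ (Fin N)) (hxoptA : xopt ∈ A) (hxopt : ∀ z ∈ A, f xopt ≤ f z)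
    (xseq : ℕ → EuclideanSpace ℝ (Fin N)) (hx0 : xseq 0 = 0)
    (hxit : ∀ n, xseq (n + 1) = PA (xseq n - (μ / 2) • gradf (xseq n))) :
    ∀ (n : ℕ) (x : EuclideanSpace ℝ (Fin N)),
      ‖xseq n - x‖ ≤
        (4 * (1 - μ * α)) ^ ((n : ℝ) / 2) * ‖xopt‖ +
          2 * Real.sqrt (μ * f xopt / (1 - 4 * (1 - μ * α))) + ‖x - xopt‖ := by
  have hβ0 : 0 < β := lt_of_lt_of_le hα hαβ
  have hμβ1 : μ * β ≤ 1 := by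
    have := (le_div_iff₀ hμ).mp hβμ; linarith
  have hμα34 : 3 / 4 < μ * α := by
    have := (div_lt_iff₀ hμ).mp hμα; nlinarith
  have hμα1 : μ * α ≤ 1 := by nlinarith
  set c : ℝ := 4 * (1 - μ * α) with hc
  have hc0 : 0 ≤ c := by simp only [hc]; linarith
  have hc1 : c < 1 := by simp only [hc]; linarith
  -- membership helpers
  have hmemA : ∀ (i : ι) (y : EuclideanSpace ℝ (Fin N)), y ∈ Asub i → y ∈ A := by
    intro i y hy; rw [hA]; exact Set.mem_iUnion.2 ⟨i, hy⟩
  have hA0 : (0 : EuclideanSpace ℝ (Fin N)) ∈ A :=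
    hmemA (Classical.arbitrary ι) 0 (Asub _).zero_mem
  have hAs : ∀ (t : ℝ) (y : EuclideanSpace ℝ (Fin N)), y ∈ A → t • y ∈ A := by
    intro t y hy
    rw [hA] at hy ⊢
    obtain ⟨s, ⟨i, rfl⟩, hs⟩ := hy
    exact Set.mem_iUnion.2 ⟨i, (Asub i).smul_mem t hs⟩
  have hsub : ∀ y₁ y₂ : EuclideanSpace ℝ (Fin N), y₁ ∈ A → y₂ ∈ A →
      y₁ - y₂ ∈ A + A + A := by
    intro y₁ y₂ h1 h2
    have he : y₁ - y₂ = y₁ + (-1 : ℝ) • y₂ + 0 := by module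
    rw [he]
    exact Set.add_mem_add (Set.add_mem_add h1 (hAs _ _ h2)) hA0
  have hxA : ∀ m, xseq m ∈ A := by
    intro m
    cases m with
    | zero => rw [hx0]; exact hA0
    | succ m => rw [hxit m]; exact (hPA _).1
  -- the key one-step contraction
  have hstep : ∀ m, ‖xseq (m + 1) - xopt‖ ^ 2 ≤
      c * ‖xseq m - xopt‖ ^ 2 + 4 * μ * f xopt := by
    intro m
    set xn := xseq m with hxn
    set g := gradf xn with hg
    set z : EuclideanSpace ℝ (Fin N) := xn - (μ / 2) • g with hz
    have hx' : xseq (m + 1) = PA z := hxit m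
    set w : EuclideanSpace ℝ (Fin N) := xseq (m + 1) - xopt with hw
    set u : EuclideanSpace ℝ (Fin N) := xn - xopt with hu
    obtain ⟨i, hi⟩ : ∃ i, xseq (m + 1) ∈ Asub i := by
      have := hxA (m + 1); rw [hA] at this; simpa [Set.mem_iUnion] using this
    obtain ⟨j, hj⟩ : ∃ j, xopt ∈ Asub j := by
      have := hxoptA; rw [hA] at this; simpa [Set.mem_iUnion] using this
    obtain ⟨k, hk⟩ : ∃ k, xn ∈ Asub k := by
      have := hxA m; rw [hA] at this; simpa [Set.mem_iUnion] using this
    set T : Submodule ℝ (EuclideanSpace ℝ (Fin N)) := Asub i ⊔ Asub j ⊔ Asub k with hT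
    have hiT : xseq (m + 1) ∈ T := (le_sup_of_le_left le_sup_left : Asub i ≤ T) hi
    have hjT : xopt ∈ T := (le_sup_of_le_left le_sup_right : Asub j ≤ T) hj
    have hkT : xn ∈ T := (le_sup_right : Asub k ≤ T) hk
    have hwT : w ∈ T := T.sub_mem hiT hjT
    have huT : u ∈ T := T.sub_mem hkT hjT
    set v : EuclideanSpace ℝ (Fin N) := (T.orthogonalProjectionOnto g : EuclideanSpace ℝ (Fin N))
      with hv
    have hvT : v ∈ T := SetLike.coe_mem _
    have hproj : ∀ t ∈ T, ⟪g - v, t⟫_ℝ = 0 := fun t ht =>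
      T.starProjection_inner_eq_zero g t ht
    have hgu : α * ‖u‖ ^ 2 + f xn - f xopt ≤ ⟪g, u⟫_ℝ := by
      have hmem : xopt - xn ∈ A + A + A := hsub _ _ hxoptA (hxA m)
      have h := (hRSCP xopt xn hmem).1
      have h1 : ‖xopt - xn‖ = ‖u‖ := by rw [hu, norm_sub_rev]
      have h2 : ⟪g, xopt - xn⟫_ℝ = -⟪g, u⟫_ℝ := by
        rw [show xopt - xn = -u by rw [hu]; module, inner_neg_right]
      rw [h1, h2] at h
      linarith
    -- norm bound for the projected gradient
    have hgv : ⟪g, v⟫_ℝ = ‖v‖ ^ 2 := by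
      have h := hproj v hvT
      rw [inner_sub_left] at h
      have h2 : ⟪v, v⟫_ℝ = ‖v‖ ^ 2 := real_inner_self_eq_norm_sq v
      linarith
    have hvnorm : ‖v‖ ^ 2 ≤ 4 * β * f xn := by
      set t : ℝ := 1 / (2 * β) with htdef
      have ht : 0 < t := by positivity
      have hmem : (xn - t • v) - xn ∈ A + A + A := by
        obtain ⟨y, hy, zk, hzk, hyzk⟩ := Submodule.mem_sup.mp hvT
        obtain ⟨p, hp, q, hq, hpq⟩ := Submodule.mem_sup.mp hy
        have he : (xn - t • v) - xn = (-t) • p + (-t) • q + (-t) • zk := by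
          rw [← hyzk, ← hpq]; module
        rw [he]
        exact Set.add_mem_add
          (Set.add_mem_add (hmemA i _ ((Asub i).smul_mem _ hp))
            (hmemA j _ ((Asub j).smul_mem _ hq)))
          (hmemA k _ ((Asub k).smul_mem _ hzk))
      have h := (hRSCP (xn - t • v) xn hmem).2
      have hd : (xn - t • v) - xn = (-t) • v := by module
      rw [hd] at h
      have h1 : ⟪g, (-t) • v⟫_ℝ = -t * ‖v‖ ^ 2 := by
        rw [real_inner_smul_right, hgv]
      have h2 : ‖(-t) • v‖ ^ 2 = t ^ 2 * ‖v‖ ^ 2 := by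
        rw [norm_smul, Real.norm_eq_abs, abs_neg, abs_of_pos ht]; ring
      rw [h1, h2] at h
      have h0 : 0 ≤ f (xn - t • v) := hf _
      have ht2 : t - β * t ^ 2 = 1 / (4 * β) := by
        rw [htdef]; field_simp; ring
      have hB : 1 / (4 * β) * ‖v‖ ^ 2 ≤ f xn := by
        rw [← ht2]; nlinarith [h, h0]
      rw [div_mul_eq_mul_div, one_mul, div_le_iff₀ (by positivity : (0:ℝ) < 4 * β)] at hB
      linarith
    -- projection (descent) inequality
    have hle : ‖z - xseq (m + 1)‖ ≤ ‖z - xopt‖ := by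
      rw [hx']; exact (hPA z).2 xopt hxoptA
    have hkey : ‖w‖ ^ 2 ≤ 2 * ⟪z - xopt, w⟫_ℝ := by
      have he := norm_add_sq_real (xseq (m + 1) - z) (z - xopt)
      rw [sub_add_sub_cancel] at he
      have h1 : ‖xseq (m + 1) - z‖ = ‖z - xseq (m + 1)‖ := norm_sub_rev _ _
      have h2 : ⟪z - xopt, w⟫_ℝ
          = ⟪xseq (m + 1) - z, z - xopt⟫_ℝ + ‖z - xopt‖ ^ 2 := by
        have hww : w = (xseq (m + 1) - z) + (z - xopt) := by rw [hw]; module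
        rw [hww, inner_add_right, real_inner_comm (z - xopt) (xseq (m+1) - z),
          real_inner_self_eq_norm_sq]
      have h3 : ‖z - xseq (m + 1)‖ ^ 2 ≤ ‖z - xopt‖ ^ 2 := by
        apply pow_le_pow_left₀ (norm_nonneg _) hle
      have h1sq : ‖xseq (m + 1) - z‖ ^ 2 = ‖z - xseq (m + 1)‖ ^ 2 := by rw [h1]
      rw [hw] at *
      linarith [he, h2, h3, h1sq]
    have hinner : ⟪z - xopt, w⟫_ℝ = ⟪u - (μ / 2) • v, w⟫_ℝ := by
      have h0 : z - xopt = u - (μ / 2) • g := by rw [hz, hu]; module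
      have hpw := hproj w hwT
      simp only [inner_sub_left, real_inner_smul_left] at hpw
      have hgw : ⟪g, w⟫_ℝ = ⟪v, w⟫_ℝ := by linarith
      rw [h0]
      simp only [inner_sub_left, real_inner_smul_left, hgw]
    have hCS : ⟪u - (μ / 2) • v, w⟫_ℝ ≤ ‖u - (μ / 2) • v‖ * ‖w‖ := real_inner_le_norm _ _
    have hguv : ⟪u, v⟫_ℝ = ⟪g, u⟫_ℝ := by
      have h := hproj u huT
      rw [inner_sub_left] at h
      rw [real_inner_comm]; linarith
    have hnorm2 : ‖u - (μ / 2) • v‖ ^ 2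
        = ‖u‖ ^ 2 - μ * ⟪g, u⟫_ℝ + μ ^ 2 / 4 * ‖v‖ ^ 2 := by
      rw [norm_sub_sq_real, real_inner_smul_right, hguv, norm_smul]
      rw [Real.norm_eq_abs, abs_of_pos (by positivity : (0:ℝ) < μ / 2)]
      ring
    have hq2 : ‖u - (μ / 2) • v‖ ^ 2 ≤ (1 - μ * α) * ‖u‖ ^ 2 + μ * f xopt := by
      rw [hnorm2]
      have h1 : μ * (α * ‖u‖ ^ 2 + f xn - f xopt) ≤ μ * ⟪g, u⟫_ℝ :=
        mul_le_mul_of_nonneg_left hgu hμ.le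
      have h2 : μ ^ 2 / 4 * ‖v‖ ^ 2 ≤ μ ^ 2 / 4 * (4 * β * f xn) :=
        mul_le_mul_of_nonneg_left hvnorm (by positivity)
      have h3 : μ ^ 2 / 4 * (4 * β * f xn) ≤ μ * f xn := by
        have h4 : μ * β * f xn ≤ 1 * f xn := mul_le_mul_of_nonneg_right hμβ1 (hf xn)
        have h5 : μ * (μ * β * f xn) ≤ μ * (1 * f xn) := mul_le_mul_of_nonneg_left h4 hμ.le
        nlinarith [h5]
      nlinarith
    -- combine
    have hb2 : ‖w‖ ^ 2 ≤ 4 * ‖u - (μ / 2) • v‖ ^ 2 := by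
      have h4 : ‖w‖ ^ 2 ≤ 2 * (‖u - (μ / 2) • v‖ * ‖w‖) := by
        rw [hinner] at hkey; linarith
      nlinarith [sq_nonneg (‖w‖ - 2 * ‖u - (μ / 2) • v‖)]
    calc ‖xseq (m + 1) - xopt‖ ^ 2 = ‖w‖ ^ 2 := by rw [hw]
      _ ≤ 4 * ‖u - (μ / 2) • v‖ ^ 2 := hb2
      _ ≤ 4 * ((1 - μ * α) * ‖u‖ ^ 2 + μ * f xopt) := by linarith
      _ = c * ‖xseq m - xopt‖ ^ 2 + 4 * μ * f xopt := by rw [hc, hu, hxn]; ring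
  -- geometric induction
  have h1c : 0 < 1 - c := by linarith
  have hS : 0 ≤ 4 * μ * f xopt / (1 - c) :=
    div_nonneg (by nlinarith [hf xopt, hμ.le]) h1c.le
  have main : ∀ m, ‖xseq m - xopt‖ ^ 2 ≤ c ^ m * ‖xopt‖ ^ 2 + 4 * μ * f xopt / (1 - c) := by
    intro m
    induction m with
    | zero =>
      rw [hx0]
      simp only [zero_sub, norm_neg, pow_zero, one_mul]
      linarith
    | succ m ih =>
      have h1 := hstep m
      have h2 : c * ‖xseq m - xopt‖ ^ 2 ≤ c * (c ^ m * ‖xopt‖ ^ 2 + 4 * μ * f xopt / (1 - c)) :=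
        mul_le_mul_of_nonneg_left ih hc0
      have h3 : c * (4 * μ * f xopt / (1 - c)) + 4 * μ * f xopt = 4 * μ * f xopt / (1 - c) := by
        field_simp
        ring
      calc ‖xseq (m + 1) - xopt‖ ^ 2 ≤ c * ‖xseq m - xopt‖ ^ 2 + 4 * μ * f xopt := h1
        _ ≤ c * (c ^ m * ‖xopt‖ ^ 2 + 4 * μ * f xopt / (1 - c)) + 4 * μ * f xopt := by linarith
        _ = c ^ (m + 1) * ‖xopt‖ ^ 2 + (c * (4 * μ * f xopt / (1 - c)) + 4 * μ * f xopt) := by ring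
        _ = c ^ (m + 1) * ‖xopt‖ ^ 2 + 4 * μ * f xopt / (1 - c) := by rw [h3]
  -- conclusion
  intro n x
  have htri : ‖xseq n - x‖ ≤ ‖xseq n - xopt‖ + ‖x - xopt‖ := by
    have h := dist_triangle (xseq n) xopt x
    simp only [dist_eq_norm] at h
    rw [norm_sub_rev xopt x] at h
    exact h
  have h1 : ‖xseq n - xopt‖ ≤ Real.sqrt (c ^ n * ‖xopt‖ ^ 2 + 4 * μ * f xopt / (1 - c)) := by
    rw [← Real.sqrt_sq (norm_nonneg (xseq n - xopt))]
    exact Real.sqrt_le_sqrt (main n)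
  have hx2 : 0 ≤ c ^ n * ‖xopt‖ ^ 2 := by positivity
  have h2 : Real.sqrt (c ^ n * ‖xopt‖ ^ 2 + 4 * μ * f xopt / (1 - c))
      ≤ Real.sqrt (c ^ n * ‖xopt‖ ^ 2) + Real.sqrt (4 * μ * f xopt / (1 - c)) := by
    rw [← Real.sqrt_sq (by positivity : (0:ℝ) ≤ Real.sqrt (c ^ n * ‖xopt‖ ^ 2)
      + Real.sqrt (4 * μ * f xopt / (1 - c)))]
    apply Real.sqrt_le_sqrt
    nlinarith [Real.sq_sqrt hx2, Real.sq_sqrt hS, Real.sqrt_nonneg (c ^ n * ‖xopt‖ ^ 2),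
      Real.sqrt_nonneg (4 * μ * f xopt / (1 - c))]
  have h3 : Real.sqrt (c ^ n * ‖xopt‖ ^ 2) = Real.sqrt (c ^ n) * ‖xopt‖ := by
    rw [Real.sqrt_mul (pow_nonneg hc0 n), Real.sqrt_sq (norm_nonneg _)]
  have h4 : Real.sqrt (c ^ n) = c ^ ((n : ℝ) / 2) := by
    rw [Real.sqrt_eq_rpow, ← Real.rpow_natCast c n, ← Real.rpow_mul hc0]
    congr 1
    ring
  have h5 : Real.sqrt (4 * μ * f xopt / (1 - c)) = 2 * Real.sqrt (μ * f xopt / (1 - c)) := by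
    rw [show 4 * μ * f xopt / (1 - c) = 2 ^ 2 * (μ * f xopt / (1 - c)) by ring,
      Real.sqrt_mul (by norm_num : (0:ℝ) ≤ 2 ^ 2), Real.sqrt_sq (by norm_num : (0:ℝ) ≤ 2)]
  calc ‖xseq n - x‖ ≤ ‖xseq n - xopt‖ + ‖x - xopt‖ := htri
    _ ≤ Real.sqrt (c ^ n * ‖xopt‖ ^ 2 + 4 * μ * f xopt / (1 - c)) + ‖x - xopt‖ := by
        linarith
    _ ≤ Real.sqrt (c ^ n * ‖xopt‖ ^ 2) + Real.sqrt (4 * μ * f xopt / (1 - c)) + ‖x - xopt‖ := by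
        linarith
    _ = c ^ ((n : ℝ) / 2) * ‖xopt‖ + 2 * Real.sqrt (μ * f xopt / (1 - c)) + ‖x - xopt‖ := by
        rw [h3, h4, h5]
end

section
/- Suppose f(z) ≥ 0 for all z ∈ H, μ > 0, μ·β ≤ 1, and the upper restricted convexity bound f(x₁) − f(x₂) − ⟨∇f(x₂), x₁ − x₂⟩ ≤ β·‖x₁ − x₂‖² holds for all x₁, x₂ ∈ H with x₁ − x₂ ∈ Γ. Then for every x ∈ H, ‖(μ/2)·P_Γ(∇f(x))‖² ≤ μ·f(x). -/
open scoped InnerProductSpace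

/-- If `f ≥ 0`, `μ > 0`, `μβ ≤ 1`, and the upper restricted convexity bound
`f(x₁) − f(x₂) − ⟨∇f(x₂), x₁ − x₂⟩ ≤ β‖x₁ − x₂‖²` holds whenever `x₁ − x₂ ∈ Γ`, then for
every `x`: `‖(μ/2)·P_Γ(∇f(x))‖² ≤ μf(x)`. -/
theorem projected_gradient_norm_bound
    {N : ℕ}
    (f : EuclideanSpace ℝ (Fin N) → ℝ) (hf : ∀ z, 0 ≤ f z)
    (gradf : EuclideanSpace ℝ (Fin N) → EuclideanSpace ℝ (Fin N))
    (hgrad : ∀ u, HasGradientAt f (gradf u) u)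
    (Γ : Submodule ℝ (EuclideanSpace ℝ (Fin N)))
    (β μ : ℝ) (hβ : 0 ≤ β) (hμ : 0 < μ) (hμβ : μ * β ≤ 1)
    (hub : ∀ x₁ x₂ : EuclideanSpace ℝ (Fin N), x₁ - x₂ ∈ Γ →
      f x₁ - f x₂ - ⟪gradf x₂, x₁ - x₂⟫_ℝ ≤ β * ‖x₁ - x₂‖ ^ 2) :
    ∀ x : EuclideanSpace ℝ (Fin N),
      ‖(μ / 2) • (Submodule.orthogonalProjectionOnto Γ (gradf x) : EuclideanSpace ℝ (Fin N))‖ ^ 2 ≤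
        μ * f x := by
  intro x
  set p : EuclideanSpace ℝ (Fin N) :=
    (Submodule.orthogonalProjectionOnto Γ (gradf x) : EuclideanSpace ℝ (Fin N)) with hp
  have hpmem : p ∈ Γ := (Submodule.orthogonalProjectionOnto Γ (gradf x)).2
  have hmem : (x - (μ/2) • p) - x ∈ Γ := by
    rw [sub_sub_cancel_left]
    exact Γ.neg_mem (Γ.smul_mem _ hpmem)
  have hkey := hub (x - (μ/2) • p) x hmem
  rw [sub_sub_cancel_left] at hkey
  have hip : ⟪gradf x, p⟫_ℝ = ‖p‖ ^ 2 := by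
    have h := Submodule.inner_orthogonalProjectionOnto_eq_of_mem_right (K := Γ)
      (Submodule.orthogonalProjectionOnto Γ (gradf x)) (gradf x)
    rw [← h, Submodule.coe_inner, real_inner_self_eq_norm_sq, hp]
  rw [inner_neg_right, real_inner_smul_right, hip, norm_neg, norm_smul] at hkey
  rw [norm_smul]
  have hnn : 0 ≤ ‖p‖ := norm_nonneg p
  have hmu2 : ‖(μ/2 : ℝ)‖ = μ/2 := by
    rw [Real.norm_eq_abs, abs_of_nonneg (by linarith)]
  rw [hmu2] at hkey ⊢
  have h0 := hf (x - (μ/2) • p)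
  nlinarith [sq_nonneg ‖p‖, mul_nonneg (mul_nonneg hμ.le hμ.le) (sq_nonneg ‖p‖)]
end

section
/- Let Φ : H → B be a map and S ⊆ H a convex set. Suppose that for every y ∈ B the function x ↦ ‖y − Φ(x)‖² is convex on S, i.e. for all x₁, x₂ ∈ S and all t ∈ [0,1], ‖y − Φ(t·x₁ + (1−t)·x₂)‖² ≤ t·‖y − Φ(x₁)‖² + (1−t)·‖y − Φ(x₂)‖². Then Φ is affine on S: for all x₁, x₂ ∈ S and all t ∈ [0,1], Φ(t·x₁ + (1−t)·x₂) = t·Φ(x₁) + (1−t)·Φ(x₂). -/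
open scoped RealInnerProductSpace


/-- Let `Φ : H → B` be a map between real inner product spaces and `S ⊆ H`
convex. If for every `y ∈ B` the function `x ↦ ‖y − Φ(x)‖²` is convex on `S`, then `Φ` is
affine on `S`: `Φ(tx₁ + (1−t)x₂) = tΦ(x₁) + (1−t)Φ(x₂)` for `x₁, x₂ ∈ S`, `t ∈ [0,1]`. -/
theorem affine_of_convex_squared_residual
    {H B : Type*} [NormedAddCommGroup H] [InnerProductSpace ℝ H]
    [NormedAddCommGroup B] [InnerProductSpace ℝ B]
    (Φ : H → B) (S : Set H) (hS : Convex ℝ S)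
    (hconv : ∀ y : B, ∀ x₁ ∈ S, ∀ x₂ ∈ S, ∀ t : ℝ, 0 ≤ t → t ≤ 1 →
      ‖y - Φ (t • x₁ + (1 - t) • x₂)‖ ^ 2 ≤
        t * ‖y - Φ x₁‖ ^ 2 + (1 - t) * ‖y - Φ x₂‖ ^ 2) :
    ∀ x₁ ∈ S, ∀ x₂ ∈ S, ∀ t : ℝ, 0 ≤ t → t ≤ 1 →
      Φ (t • x₁ + (1 - t) • x₂) = t • Φ x₁ + (1 - t) • Φ x₂ := by
  intro x₁ hx₁ x₂ hx₂ t ht0 ht1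
  set m := Φ (t • x₁ + (1 - t) • x₂) with hm
  set a := Φ x₁ with ha
  set b := Φ x₂ with hb
  by_contra hne
  set d : B := t • a + (1 - t) • b - m with hd
  have hdne : d ≠ 0 := sub_ne_zero.mpr fun h => hne h.symm
  have hdpos : (0:ℝ) < ‖d‖ ^ 2 := pow_pos (norm_pos_iff.mpr hdne) 2
  set C : ℝ := t * ‖a‖ ^ 2 + (1 - t) * ‖b‖ ^ 2 - ‖m‖ ^ 2 with hC
  have key : ∀ y : B, 2 * (inner ℝ y d : ℝ) ≤ C := by
    intro y
    have h := hconv y x₁ hx₁ x₂ hx₂ t ht0 ht1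
    rw [← hm, ← ha, ← hb] at h
    have e1 : ‖y - m‖ ^ 2 = ‖y‖ ^ 2 - 2 * (inner ℝ y m : ℝ) + ‖m‖ ^ 2 := norm_sub_sq_real y m
    have e2 : ‖y - a‖ ^ 2 = ‖y‖ ^ 2 - 2 * (inner ℝ y a : ℝ) + ‖a‖ ^ 2 := norm_sub_sq_real y a
    have e3 : ‖y - b‖ ^ 2 = ‖y‖ ^ 2 - 2 * (inner ℝ y b : ℝ) + ‖b‖ ^ 2 := norm_sub_sq_real y b
    have e4 : (inner ℝ y d : ℝ) = t * (inner ℝ y a : ℝ) + (1 - t) * (inner ℝ y b : ℝ) - (inner ℝ y m : ℝ) := by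
      simp [hd, inner_sub_right, inner_add_right, inner_smul_right]
    nlinarith
  have h := key (((C + 1) / (2 * ‖d‖ ^ 2)) • d)
  rw [real_inner_smul_left, real_inner_self_eq_norm_sq] at h
  rw [div_mul_eq_mul_div, mul_comm] at h
  have : 2 * ((C + 1) * ‖d‖ ^ 2 / (2 * ‖d‖ ^ 2)) = C + 1 := by
    field_simp
  linarith [this ▸ h]
end
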